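/- arXiv:1905.04449 — 6 statements merged into one kernel-verified Lean document; each statement's English description precedes it below -/
import Mathlib

section
/- Let A be an n1 × n2 × n3 complex tensor and B be an n2 × n4 × n3 complex tensor, and let C = A ∗ B be their t-product. Then for every k, the k-th frontal slice of the mode-3 DFT of C equals the matrix product of the k-th frontal slices of the mode-3 DFTs of A and B: C̄^(k) = Ā^(k) · B̄^(k). -/
open Matrix
open scoped BigOperators ComplexConjugate

noncomputable section

/-- Circular convolution of two vectors of length `n`, indexed by `ZMod n`. -/
def cconv {n : ℕ} [NeZero n] (a b : ZMod n → ℂ) : ZMod n → ℂ :=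
  fun k => ∑ t : ZMod n, a t * b (k - t)

/-- Unnormalized discrete Fourier transform with ω = exp(-2πi/n):
`dft x k = ∑ t, x t * ω ^ (k*t)`. -/
def dft {n : ℕ} [NeZero n] (x : ZMod n → ℂ) : ZMod n → ℂ :=
  fun k => ∑ t : ZMod n, x t * Complex.exp (-(2 * Real.pi * Complex.I) / n) ^ (k * t).val

/-- A third-order complex tensor of size n1 × n2 × n3 (third index taken modulo n3). -/
abbrev Tensor (n1 n2 n3 : ℕ) := Fin n1 → Fin n2 → ZMod n3 → ℂ

/-- The t-product: the (i,j)-th mode-3 tube of `A ∗ B` is `∑ k, A(i,k,·) ⋆ B(k,j,·)`. -/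
def tProd {n1 n2 n4 n3 : ℕ} [NeZero n3] (A : Tensor n1 n2 n3) (B : Tensor n2 n4 n3) :
    Tensor n1 n4 n3 :=
  fun i j => ∑ k : Fin n2, cconv (A i k) (B k j)

/-- Mode-3 DFT: apply the DFT to every mode-3 tube. -/
def mdft {n1 n2 n3 : ℕ} [NeZero n3] (X : Tensor n1 n2 n3) : Tensor n1 n2 n3 :=
  fun i j => dft (X i j)

/-- The k-th frontal fslice of a tensor, as a matrix. -/
def fslice {n1 n2 n3 : ℕ} (X : Tensor n1 n2 n3) (k : ZMod n3) : Matrix (Fin n1) (Fin n2) ℂ :=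
  Matrix.of fun i j => X i j k

/-- Conjugate transpose of a tensor: conjugate-transpose each frontal fslice and reverse
the order of the transposed slices 2 through n3, i.e. `Xᴴ(i,j,t) = conj (X j i (-t))`. -/
def tconj {n1 n2 n3 : ℕ} (X : Tensor n1 n2 n3) : Tensor n2 n1 n3 :=
  fun i j t => (starRingEnd ℂ) (X j i (-t))

/-- The identity tensor: first frontal fslice is the identity matrix, others are zero. -/
def tId (n n3 : ℕ) : Tensor n n n3 :=
  fun i j t => if t = 0 ∧ i = j then 1 else 0

/-- A tensor `Q` is orthogonal if `Q ∗ Qᴴ = Qᴴ ∗ Q = I`. -/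
def TOrthogonal {n n3 : ℕ} [NeZero n3] (Q : Tensor n n n3) : Prop :=
  tProd Q (tconj Q) = tId n n3 ∧ tProd (tconj Q) Q = tId n n3

/-- A tensor is f-diagonal if each of its frontal slices is a diagonal matrix. -/
def FDiagonal {n1 n2 n3 : ℕ} (S : Tensor n1 n2 n3) : Prop :=
  ∀ (i : Fin n1) (j : Fin n2) (k : ZMod n3), (i : ℕ) ≠ (j : ℕ) → S i j k = 0

/-- Frobenius norm of a tensor. -/
def frob {n1 n2 n3 : ℕ} [NeZero n3] (X : Tensor n1 n2 n3) : ℝ :=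
  Real.sqrt (∑ i : Fin n1, ∑ j : Fin n2, ∑ t : ZMod n3, ‖X i j t‖ ^ 2)

/-- Frobenius norm of a matrix. -/
def frobM {m n : ℕ} (M : Matrix (Fin m) (Fin n) ℂ) : ℝ :=
  Real.sqrt (∑ i : Fin m, ∑ j : Fin n, ‖M i j‖ ^ 2)

/-- Nuclear norm of a matrix: the sum of its singular values,
i.e. of the square roots of the eigenvalues of `Mᴴ * M`. -/
def nuclearNorm {m n : ℕ} (M : Matrix (Fin m) (Fin n) ℂ) : ℝ :=
  ∑ j : Fin n, Real.sqrt ((Matrix.isHermitian_conjTranspose_mul_self M).eigenvalues j)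

/-- The tensor nuclear norm: sum of the nuclear norms of the Fourier-domain frontal slices. -/
def tnn {n1 n2 n3 : ℕ} [NeZero n3] (X : Tensor n1 n2 n3) : ℝ :=
  ∑ k : ZMod n3, nuclearNorm (fslice (mdft X) k)



lemma pow_val_add' {n : ℕ} [NeZero n] (ω : ℂ) (hω : ω ^ n = 1) (x y : ZMod n) :
    ω ^ (x + y).val = ω ^ x.val * ω ^ y.val := by
  rw [← pow_add, ZMod.val_add]
  conv_rhs => rw [← Nat.mod_add_div (x.val + y.val) n]
  rw [pow_add, pow_mul, hω, one_pow, mul_one]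

lemma homega {n : ℕ} [NeZero n] :
    Complex.exp (-(2 * Real.pi * Complex.I) / n) ^ (n:ℕ) = 1 := by
  rw [← Complex.exp_nat_mul]
  have hn : (n:ℂ) ≠ 0 := Nat.cast_ne_zero.mpr (NeZero.ne n)
  rw [mul_div_cancel₀ _ hn]
  simpa [push_cast] using Complex.exp_int_mul_two_pi_mul_I (-1)

/-- the mode-3 DFT of a t-product has frontal slices equal to the matrix
products of the corresponding Fourier-domain frontal slices of the factors. -/
theorem fslice_mdft_tProd {n1 n2 n4 n3 : ℕ} [NeZero n3]
    (A : Tensor n1 n2 n3) (B : Tensor n2 n4 n3) (k : ZMod n3) :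
    fslice (mdft (tProd A B)) k = fslice (mdft A) k * fslice (mdft B) k := by
  ext i j
  simp only [fslice, mdft, tProd, dft, cconv, Matrix.mul_apply, Matrix.of_apply,
    Finset.sum_apply]
  set ω := Complex.exp (-(2 * Real.pi * Complex.I) / n3) with hωdef
  have hω : ω ^ n3 = 1 := homega
  simp only [Finset.sum_mul, Finset.sum_mul_sum]
  rw [Finset.sum_comm (s := (Finset.univ : Finset (ZMod n3)))
    (t := (Finset.univ : Finset (Fin n2)))
    (f := fun t m => ∑ s : ZMod n3, A i m s * B m j (t - s) * ω ^ (k * t).val)]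
  refine Finset.sum_congr rfl fun m _ => ?_
  rw [Finset.sum_comm (s := (Finset.univ : Finset (ZMod n3)))
    (t := (Finset.univ : Finset (ZMod n3)))
    (f := fun t s => A i m s * B m j (t - s) * ω ^ (k * t).val)]
  refine Finset.sum_congr rfl fun s _ => ?_
  rw [Finset.mul_sum]
  rw [← Equiv.sum_comp (Equiv.addRight s) (fun t => A i m s * B m j (t - s) * ω ^ (k * t).val)]
  refine Finset.sum_congr rfl fun u _ => ?_
  simp only [Equiv.coe_addRight, add_sub_cancel_right]
  rw [mul_add k u s, pow_val_add' ω hω]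
  ring

end
end

section
/- For an n1 × n2 × n3 complex tensor X, the frontal slices of the mode-3 DFT of the conjugate transpose X^H are the conjugate transposes of the corresponding frontal slices of the mode-3 DFT of X: for every k, the k-th frontal slice of (X^H)‾ equals (X̄^(k))^H (the conjugate transpose of the k-th frontal slice of X̄). Consequently, for tensors A, B of compatible sizes, (A ∗ B)^H = B^H ∗ A^H. -/
open Matrix
open scoped BigOperators ComplexConjugate

noncomputable section

lemma omega_pow_n {n : ℕ} [NeZero n] :
    Complex.exp (-(2 * Real.pi * Complex.I) / n) ^ n = 1 := by
  rw [← Complex.exp_nat_mul]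
  have hn : (n : ℂ) ≠ 0 := Nat.cast_ne_zero.mpr (NeZero.ne n)
  have h : (n : ℂ) * (-(2 * Real.pi * Complex.I) / n) = -(2 * Real.pi * Complex.I) := by
    field_simp
  rw [h, Complex.exp_neg, Complex.exp_two_pi_mul_I, inv_one]

lemma omega_pow_mod {n : ℕ} [NeZero n] (m : ℕ) :
    Complex.exp (-(2 * Real.pi * Complex.I) / n) ^ (m % n) =
    Complex.exp (-(2 * Real.pi * Complex.I) / n) ^ m := by
  conv_rhs => rw [← Nat.div_add_mod m n]
  rw [pow_add, pow_mul, omega_pow_n, one_pow, one_mul]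

lemma omega_pow_val_neg {n : ℕ} [NeZero n] (a : ZMod n) :
    Complex.exp (-(2 * Real.pi * Complex.I) / n) ^ ((-a).val) =
    (starRingEnd ℂ) (Complex.exp (-(2 * Real.pi * Complex.I) / n) ^ a.val) := by
  set ω := Complex.exp (-(2 * Real.pi * Complex.I) / (n : ℂ)) with hω
  have hne : ω ≠ 0 := Complex.exp_ne_zero _
  have hconjz : (starRingEnd ℂ) (-(2 * Real.pi * Complex.I) / (n : ℂ)) =
      -(-(2 * Real.pi * Complex.I) / (n : ℂ)) := by
    simp [map_div₀, Complex.conj_I, map_ofNat]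
    ring
  have hconj : (starRingEnd ℂ) ω = ω⁻¹ := by
    rw [hω, ← Complex.exp_conj, hconjz, Complex.exp_neg]
  have hprod : ω ^ ((-a).val) * ω ^ (a.val) = 1 := by
    rw [← pow_add, ← omega_pow_mod, ← ZMod.val_add]
    simp
  rw [map_pow, hconj, inv_pow]
  exact eq_inv_of_mul_eq_one_left hprod


/-- Fourier-domain frontal slices of the conjugate transpose tensor are the
conjugate transposes of the Fourier-domain frontal slices; consequently
`(A ∗ B)ᴴ = Bᴴ ∗ Aᴴ`. -/
theorem tconj_fourier_and_tProd {n1 n2 n4 n3 : ℕ} [NeZero n3] :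
    (∀ (X : Tensor n1 n2 n3) (k : ZMod n3),
        fslice (mdft (tconj X)) k = (fslice (mdft X) k)ᴴ) ∧
    (∀ (A : Tensor n1 n2 n3) (B : Tensor n2 n4 n3),
        tconj (tProd A B) = tProd (tconj B) (tconj A)) := by
  constructor
  · intro X k
    ext i j
    simp only [fslice, Matrix.conjTranspose_apply, Matrix.of_apply, mdft, dft, tconj,
      Complex.star_def, map_sum, _root_.map_mul]
    refine Fintype.sum_equiv (Equiv.neg _) _ _ fun x => ?_
    simp only [Equiv.neg_apply]
    congr 1
    have h := congrArg (starRingEnd ℂ)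
      (omega_pow_val_neg (n := n3) (k * x))
    rw [Complex.conj_conj] at h
    rw [mul_neg]
    exact h.symm
  · intro A B
    funext i j t
    simp only [tconj, tProd, cconv, Finset.sum_apply, map_sum, _root_.map_mul]
    refine Finset.sum_congr rfl fun k _ => ?_
    refine Fintype.sum_equiv (Equiv.addRight t) _ _ fun x => ?_
    simp only [Equiv.coe_addRight]
    have e1 : -(x + t) = -t - x := by ring
    have e2 : -(t - (x + t)) = x := by ring
    rw [e1, e2, mul_comm]

end
end

section
/- (t-SVD) Every third-order complex tensor X of size n1 × n2 × n3 admits a decomposition X = U ∗ S ∗ V^H, where U is an n1 × n1 × n3 orthogonal tensor, V is an n2 × n2 × n3 orthogonal tensor, and S is an n1 × n2 × n3 f-diagonal tensor whose frontal slices in the Fourier domain have nonnegative real diagonal entries. -/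
open Matrix
open scoped BigOperators ComplexConjugate

noncomputable section

namespace TSVDAux
variable {n : ℕ} [NeZero n]

/-- The base root of unity. -/
def Ω (n : ℕ) : ℂ := Complex.exp (-(2 * Real.pi * Complex.I) / n)

/-- The character `a ↦ Ω ^ a.val`. -/
def χ {n : ℕ} (a : ZMod n) : ℂ := Ω n ^ a.val

lemma omega_eq_inv : Ω n = (Complex.exp (2 * Real.pi * Complex.I / n))⁻¹ := by
  unfold Ω
  rw [show -(2 * (Real.pi:ℂ) * Complex.I) / n = -(2 * Real.pi * Complex.I / n) by ring,
    Complex.exp_neg]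

lemma isPrimitiveRoot_omega : IsPrimitiveRoot (Ω n) n := by
  rw [omega_eq_inv]
  exact (Complex.isPrimitiveRoot_exp n (NeZero.ne n)).inv

lemma omega_pow_n : Ω n ^ n = (1 : ℂ) := (isPrimitiveRoot_omega (n := n)).pow_eq_one

lemma omega_pow_mod (x : ℕ) : Ω n ^ (x % n) = Ω n ^ x := by
  conv_rhs => rw [← Nat.div_add_mod x n]
  rw [pow_add, pow_mul, omega_pow_n, one_pow, one_mul]

omit [NeZero n] in
lemma chi_zero : χ (n := n) 0 = 1 := by
  simp [χ, ZMod.val_zero]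

lemma chi_add (a b : ZMod n) : χ (a + b) = χ a * χ b := by
  unfold χ
  rw [ZMod.val_add, omega_pow_mod, pow_add]

omit [NeZero n] in
lemma chi_ne_zero (a : ZMod n) : χ a ≠ 0 := by
  unfold χ Ω
  exact pow_ne_zero _ (Complex.exp_ne_zero _)

lemma chi_neg (a : ZMod n) : χ (-a) = (χ a)⁻¹ := by
  have h : χ (-a) * χ a = 1 := by rw [← chi_add, neg_add_cancel, chi_zero]
  field_simp [chi_ne_zero a] at h ⊢
  linear_combination h

lemma chi_ne_one {k : ZMod n} (hk : k ≠ 0) : χ k ≠ 1 := by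
  unfold χ
  have h1 : 0 < k.val := Nat.pos_of_ne_zero (fun h => hk ((ZMod.val_eq_zero k).mp h))
  exact (isPrimitiveRoot_omega (n := n)).pow_ne_one_of_pos_of_lt h1.ne' (ZMod.val_lt k)

/-- Orthogonality of characters. -/
lemma chi_sum (k : ZMod n) : ∑ t : ZMod n, χ (k * t) = if k = 0 then (n : ℂ) else 0 := by
  by_cases hk : k = 0
  · simp [hk, chi_zero, Finset.card_univ, ZMod.card]
  · rw [if_neg hk]
    set S := ∑ t : ZMod n, χ (k * t) with hS
    have hshift : χ k * S = S := by
      rw [hS, Finset.mul_sum]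
      have h1 : ∀ t : ZMod n, χ k * χ (k * t) = χ (k * (t + 1)) := by
        intro t; rw [mul_add, mul_one, chi_add, mul_comm]
      simp_rw [h1]
      exact Fintype.sum_equiv (Equiv.addRight 1) _ _ (fun t => rfl)
    have h2 : (χ k - 1) * S = 0 := by linear_combination hshift
    rcases mul_eq_zero.mp h2 with h | h
    · exact absurd (sub_eq_zero.mp h) (chi_ne_one hk)
    · exact h

lemma dft_eq (x : ZMod n → ℂ) (k : ZMod n) : dft x k = ∑ t : ZMod n, x t * χ (k * t) := rfl

/-- Inverse DFT. -/
def idft {n : ℕ} [NeZero n] (y : ZMod n → ℂ) : ZMod n → ℂ :=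
  fun s => (n : ℂ)⁻¹ * ∑ k : ZMod n, y k * χ (-(k * s))

lemma delta_sum (x : ZMod n → ℂ) (k : ZMod n) :
    ∑ j : ZMod n, x j * (if k - j = 0 then (n : ℂ) else 0) = x k * n := by
  rw [Finset.sum_eq_single k]
  · simp
  · intro j _ hj
    rw [if_neg (by simpa [sub_eq_zero] using (Ne.symm hj)), mul_zero]
  · intro h; exact absurd (Finset.mem_univ k) h

lemma delta_sum' (x : ZMod n → ℂ) (k : ZMod n) :
    ∑ j : ZMod n, x j * (if j - k = 0 then (n : ℂ) else 0) = x k * n := by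
  rw [Finset.sum_eq_single k]
  · simp
  · intro j _ hj
    rw [if_neg (by simpa [sub_eq_zero] using hj), mul_zero]
  · intro h; exact absurd (Finset.mem_univ k) h

lemma dft_idft (y : ZMod n → ℂ) : dft (idft y) = y := by
  funext k
  have hn : (n : ℂ) ≠ 0 := Nat.cast_ne_zero.mpr (NeZero.ne n)
  rw [dft_eq]
  simp only [idft]
  have hχ : ∀ (j t : ZMod n), χ (-(j * t)) * χ (k * t) = χ ((k - j) * t) := by
    intro j t; rw [← chi_add]; congr 1; ring
  simp_rw [mul_assoc, Finset.sum_mul, mul_assoc, hχ, ← Finset.mul_sum]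
  rw [Finset.sum_comm]
  simp_rw [← Finset.mul_sum, chi_sum]
  rw [delta_sum, mul_comm (y k) ((n:ℕ):ℂ), inv_mul_cancel_left₀ hn]

lemma idft_dft (x : ZMod n → ℂ) : idft (dft x) = x := by
  funext s
  have hn : (n : ℂ) ≠ 0 := Nat.cast_ne_zero.mpr (NeZero.ne n)
  simp only [idft]
  simp_rw [dft_eq]
  have hχ : ∀ (j t : ZMod n), χ (j * t) * χ (-(j * s)) = χ ((t - s) * j) := by
    intro j t; rw [← chi_add]; congr 1; ring
  simp_rw [Finset.sum_mul, mul_assoc, hχ]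
  rw [Finset.sum_comm]
  simp_rw [← Finset.mul_sum, chi_sum]
  rw [delta_sum', mul_comm (x s) ((n:ℕ):ℂ), inv_mul_cancel_left₀ hn]

lemma chi_conj (a : ZMod n) : (starRingEnd ℂ) (χ a) = χ (-a) := by
  rw [chi_neg]
  unfold χ
  rw [map_pow, ← inv_pow]
  congr 1
  unfold Ω
  rw [← Complex.exp_conj, ← Complex.exp_neg]
  congr 1
  simp only [map_div₀, map_neg, _root_.map_mul, Complex.conj_I, Complex.conj_ofReal,
    Complex.conj_natCast, map_ofNat]
  ring

lemma dft_conj_flip (x : ZMod n → ℂ) (k : ZMod n) :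
    dft (fun t => (starRingEnd ℂ) (x (-t))) k = (starRingEnd ℂ) (dft x k) := by
  rw [dft_eq, dft_eq, map_sum]
  simp_rw [_root_.map_mul, chi_conj]
  refine Fintype.sum_equiv (Equiv.neg (ZMod n)) _ _ (fun t => ?_)
  simp only [Equiv.neg_apply]
  congr 2
  ring

lemma dft_cconv (a b : ZMod n → ℂ) (k : ZMod n) :
    dft (cconv a b) k = dft a k * dft b k := by
  rw [dft_eq, dft_eq, dft_eq]
  unfold cconv
  simp_rw [Finset.sum_mul]
  rw [Finset.sum_comm]
  have h : ∀ s t : ZMod n, a s * b (t - s) * χ (k * t)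
      = (a s * χ (k * s)) * (b (t - s) * χ (k * (t - s))) := by
    intro s t
    have hs : χ (k * t) = χ (k * s) * χ (k * (t - s)) := by
      rw [← chi_add]; congr 1; ring
    rw [hs]; ring
  simp_rw [h, ← Finset.mul_sum]
  have hinner : ∀ s : ZMod n, ∑ t : ZMod n, b (t - s) * χ (k * (t - s))
      = ∑ t : ZMod n, b t * χ (k * t) :=
    fun s => Fintype.sum_equiv (Equiv.subRight s) _ _ (fun t => rfl)
  simp_rw [hinner]
  try rw [← Finset.sum_mul]

section TensorLemmas

variable {n1 n2 n3 n4 : ℕ} [NeZero n3]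

/-- Inverse mode-3 DFT. -/
def imdft {n1 n2 n3 : ℕ} [NeZero n3] (Y : Tensor n1 n2 n3) : Tensor n1 n2 n3 :=
  fun i j => idft (Y i j)

lemma mdft_imdft (Y : Tensor n1 n2 n3) : mdft (imdft Y) = Y := by
  funext i j
  exact dft_idft (Y i j)

lemma mdft_inj {A B : Tensor n1 n2 n3} (h : mdft A = mdft B) : A = B := by
  funext i j t
  have h1 : dft (A i j) = dft (B i j) := congrFun (congrFun h i) j
  have h2 : idft (dft (A i j)) = idft (dft (B i j)) := by rw [h1]
  rw [idft_dft, idft_dft] at h2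
  exact congrFun h2 t

lemma mdft_tProd (A : Tensor n1 n2 n3) (B : Tensor n2 n4 n3) (i : Fin n1) (j : Fin n4)
    (k : ZMod n3) :
    mdft (tProd A B) i j k = ∑ l : Fin n2, mdft A i l k * mdft B l j k := by
  show dft (tProd A B i j) k = _
  rw [dft_eq]
  have h1 : ∀ t, tProd A B i j t = ∑ l : Fin n2, cconv (A i l) (B l j) t := by
    intro t
    show (∑ l : Fin n2, cconv (A i l) (B l j)) t = _
    simp
  simp_rw [h1, Finset.sum_mul]
  rw [Finset.sum_comm]
  have h2 : ∀ l, ∑ t : ZMod n3, cconv (A i l) (B l j) t * χ (k * t)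
      = mdft A i l k * mdft B l j k := by
    intro l
    rw [← dft_eq, dft_cconv]
    rfl
  simp_rw [h2]

lemma mdft_tconj (X : Tensor n1 n2 n3) (i : Fin n2) (j : Fin n1) (k : ZMod n3) :
    mdft (tconj X) i j k = (starRingEnd ℂ) (mdft X j i k) :=
  dft_conj_flip (X j i) k

lemma mdft_tId (q : ℕ) (i j : Fin q) (k : ZMod n3) :
    mdft (tId q n3) i j k = if i = j then 1 else 0 := by
  show dft (tId q n3 i j) k = _
  rw [dft_eq]
  unfold tId
  by_cases hij : i = j
  · rw [if_pos hij]
    rw [Finset.sum_eq_single (0 : ZMod n3)]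
    · rw [if_pos ⟨rfl, hij⟩, one_mul, mul_zero, chi_zero]
    · intro t _ ht
      rw [if_neg (fun h => ht h.1), zero_mul]
    · intro h
      exact absurd (Finset.mem_univ _) h
  · rw [if_neg hij]
    apply Finset.sum_eq_zero
    intro t _
    rw [if_neg (fun h => hij h.2), zero_mul]

lemma idft_zero_fun (k : ZMod n3) : idft (fun _ : ZMod n3 => (0 : ℂ)) k = 0 := by
  simp [idft]

end TensorLemmas

lemma svd_exists {m p : ℕ} (M : Matrix (Fin m) (Fin p) ℂ) :
    ∃ (U : Matrix (Fin m) (Fin m) ℂ) (V : Matrix (Fin p) (Fin p) ℂ)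
      (D : Matrix (Fin m) (Fin p) ℂ),
      U * Uᴴ = 1 ∧ Uᴴ * U = 1 ∧ V * Vᴴ = 1 ∧ Vᴴ * V = 1 ∧
      (∀ (i : Fin m) (j : Fin p), (i : ℕ) ≠ (j : ℕ) → D i j = 0) ∧
      (∀ (i : Fin m) (j : Fin p), 0 ≤ (D i j).re ∧ (D i j).im = 0) ∧
      M = U * D * Vᴴ := by
  classical
  have hH : (Mᴴ * M).IsHermitian := Matrix.isHermitian_conjTranspose_mul_self M
  set V₀ : Matrix (Fin p) (Fin p) ℂ :=
    (Matrix.IsHermitian.eigenvectorUnitary hH : Matrix (Fin p) (Fin p) ℂ) with hV₀def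
  set μ : Fin p → ℝ := hH.eigenvalues with hμdef
  have hμ : ∀ a, 0 ≤ μ a := fun a => Matrix.eigenvalues_conjTranspose_mul_self_nonneg M a
  have hmem := (Matrix.IsHermitian.eigenvectorUnitary hH).property
  rw [Unitary.mem_iff] at hmem
  have hV₀unit : V₀ᴴ * V₀ = 1 := by
    rw [← Matrix.star_eq_conjTranspose]; exact hmem.1
  set W : Matrix (Fin m) (Fin p) ℂ := M * V₀ with hWdef
  have hW : Wᴴ * W = Matrix.diagonal (fun a => ((μ a : ℝ) : ℂ)) := by
    have h1 : Wᴴ * W = V₀ᴴ * ((Mᴴ * M) * V₀) := by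
      rw [hWdef, Matrix.conjTranspose_mul, Matrix.mul_assoc, ← Matrix.mul_assoc Mᴴ M V₀]
    rw [h1, hH.spectral_theorem, Unitary.conjStarAlgAut_apply, Matrix.star_eq_conjTranspose]
    rw [mul_assoc (V₀ * _) V₀ᴴ V₀, hV₀unit, mul_one, ← mul_assoc, hV₀unit, one_mul]
    rfl
  have hWentry : ∀ a b, (∑ i, (starRingEnd ℂ) (W i a) * W i b)
      = if a = b then ((μ a : ℝ) : ℂ) else 0 := by
    intro a b
    have h : (Wᴴ * W) a b = Matrix.diagonal (fun a => ((μ a : ℝ) : ℂ)) a b := by rw [hW]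
    rw [Matrix.mul_apply, Matrix.diagonal_apply] at h
    simp_rw [Matrix.conjTranspose_apply] at h
    exact h
  have hWzero : ∀ a, μ a = 0 → ∀ i, W i a = 0 := by
    intro a ha i
    have h := hWentry a a
    rw [if_pos rfl, ha] at h
    simp_rw [← Complex.normSq_eq_conj_mul_self] at h
    have h' : ∑ i, Complex.normSq (W i a) = 0 := by exact_mod_cast h
    have h'' := (Finset.sum_eq_zero_iff_of_nonneg
      (fun i _ => Complex.normSq_nonneg _)).mp h' i (Finset.mem_univ i)
    exact Complex.normSq_eq_zero.mp h''
  -- sorting the eigenvalues so that the nonzero ones come first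
  set f : Fin p → ℕ := fun a => if μ a = 0 then 1 else 0 with hfdef
  set τ : Equiv.Perm (Fin p) := Tuple.sort f with hτdef
  have hmono : Monotone (f ∘ τ) := Tuple.monotone_sort f
  set ν : Fin p → ℝ := fun a => μ (τ a) with hνdef
  have hν : ∀ a, 0 ≤ ν a := fun a => hμ (τ a)
  set r : ℕ := (Finset.univ.filter (fun a : Fin p => μ a ≠ 0)).card with hrdef
  have hrcard : (Finset.univ.filter (fun a : Fin p => ν a ≠ 0)).card = r := by
    rw [hrdef]
    apply Finset.card_bij (fun a _ => τ a)
    · intro a ha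
      simp only [Finset.mem_filter, Finset.mem_univ, true_and] at ha ⊢
      exact ha
    · intro a _ b _ hab
      exact τ.injective hab
    · intro b hb
      refine ⟨τ.symm b, ?_, by simp⟩
      simp only [Finset.mem_filter, Finset.mem_univ, true_and] at hb ⊢
      rw [hνdef]
      simpa using hb
  have hfτ0 : ∀ a : Fin p, ν a ≠ 0 → (f ∘ τ) a = 0 := by
    intro a ha
    simp only [Function.comp_apply, hfdef]
    rw [if_neg ha]
  have hfτ1 : ∀ a : Fin p, ν a = 0 → (f ∘ τ) a = 1 := by
    intro a ha
    simp only [Function.comp_apply, hfdef]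
    rw [if_pos ha]
  have hB : ∀ a : Fin p, ν a ≠ 0 → (a : ℕ) < r := by
    intro a ha
    have hsub : Finset.Iic a ⊆ Finset.univ.filter (fun b => ν b ≠ 0) := by
      intro b hb
      simp only [Finset.mem_Iic] at hb
      simp only [Finset.mem_filter, Finset.mem_univ, true_and]
      intro hb0
      have h1 : (f ∘ τ) b ≤ (f ∘ τ) a := hmono hb
      have h2 := hfτ0 a ha
      have h3 := hfτ1 b hb0
      omega
    have hcard := Finset.card_le_card hsub
    rw [Fin.card_Iic, hrcard] at hcard
    omega
  have hA : ∀ a : Fin p, (a : ℕ) < r → ν a ≠ 0 := by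
    intro a har ha0
    have hsub : Finset.univ.filter (fun b : Fin p => ν b ≠ 0) ⊆ Finset.Iio a := by
      intro b hb
      simp only [Finset.mem_filter, Finset.mem_univ, true_and] at hb
      simp only [Finset.mem_Iio]
      by_contra hba
      push_neg at hba
      have h1 : (f ∘ τ) a ≤ (f ∘ τ) b := hmono hba
      have h2 := hfτ1 a ha0
      have h3 := hfτ0 b hb
      omega
    have hcard := Finset.card_le_card hsub
    rw [Fin.card_Iio, hrcard] at hcard
    omega
  have hrp : r ≤ p := le_trans (Finset.card_filter_le _ _) (by simp)
  -- the normalized nonzero columns of W are orthonormal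
  set wcol : Fin p → EuclideanSpace ℂ (Fin m) := fun a => WithLp.toLp 2 (fun i => W i a) with hwcoldef
  set u : Fin p → EuclideanSpace ℂ (Fin m) :=
    fun a => (((Real.sqrt (μ a) : ℝ) : ℂ))⁻¹ • wcol a with hudef
  have huu : ∀ a b, μ a ≠ 0 → μ b ≠ 0 →
      (inner ℂ (u a) (u b) : ℂ) = if a = b then 1 else 0 := by
    intro a b ha hb
    have hsa : Real.sqrt (μ a) ≠ 0 :=
      Real.sqrt_ne_zero'.mpr (lt_of_le_of_ne (hμ a) (Ne.symm ha))
    rw [hudef]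
    simp only
    rw [inner_smul_left, inner_smul_right]
    have hbase : (inner ℂ (wcol a) (wcol b) : ℂ)
        = if a = b then ((μ a : ℝ) : ℂ) else 0 := by
      rw [PiLp.inner_apply]
      simp only [RCLike.inner_apply]
      rw [← hWentry a b]; exact Finset.sum_congr rfl fun x _ => mul_comm _ _
    rw [hbase, map_inv₀, Complex.conj_ofReal]
    by_cases hab : a = b
    · subst hab
      rw [if_pos rfl, if_pos rfl]
      have hs : Real.sqrt (μ a) * Real.sqrt (μ a) = μ a := Real.mul_self_sqrt (hμ a)
      rw [← hs]
      push_cast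
      field_simp
      rw [Real.sqrt_sq (Real.sqrt_nonneg _)]
      exact div_self (pow_ne_zero 2 (Complex.ofReal_ne_zero.mpr hsa))
    · rw [if_neg hab, if_neg hab, mul_zero, mul_zero]
  have hrm : r ≤ m := by
    have hT : Fintype.card {a : Fin p // μ a ≠ 0} = r := by
      rw [hrdef, Fintype.card_subtype]
    have horth : Orthonormal ℂ (fun a : {a : Fin p // μ a ≠ 0} => u a.val) := by
      rw [orthonormal_iff_ite]
      intro a b
      rw [huu a.val b.val a.property b.property]
      by_cases hab : a = b
      · simp [hab]
      · rw [if_neg hab, if_neg (fun h => hab (Subtype.ext h))]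
    have hfin := horth.linearIndependent.fintype_card_le_finrank
    rwa [hT, finrank_euclideanSpace_fin] at hfin
  -- extend to an orthonormal basis
  set v : Fin m → EuclideanSpace ℂ (Fin m) := fun i =>
    if h : (i : ℕ) < r then u (τ (⟨(i : ℕ), lt_of_lt_of_le h hrp⟩ : Fin p)) else 0 with hvdef
  have hvo : Orthonormal ℂ (({i : Fin m | (i : ℕ) < r}).restrict v) := by
    rw [orthonormal_iff_ite]
    rintro ⟨i, hi⟩ ⟨j, hj⟩
    have hi' : (i : ℕ) < r := hi
    have hj' : (j : ℕ) < r := hj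
    simp only [Set.restrict_apply, Set.restrict, hvdef]
    rw [dif_pos hi', dif_pos hj']
    have hμi : μ (τ (⟨(i : ℕ), lt_of_lt_of_le hi' hrp⟩ : Fin p)) ≠ 0 :=
      hA _ (by simp [hi'])
    have hμj : μ (τ (⟨(j : ℕ), lt_of_lt_of_le hj' hrp⟩ : Fin p)) ≠ 0 :=
      hA _ (by simp [hj'])
    rw [huu _ _ hμi hμj]
    simp [Equiv.apply_eq_iff_eq, Fin.ext_iff, Subtype.ext_iff]
  obtain ⟨b, hb⟩ := hvo.exists_orthonormalBasis_extension_of_card_eq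
    (by simp [finrank_euclideanSpace_fin])
  set Umat : Matrix (Fin m) (Fin m) ℂ := Matrix.of (fun i j => b j i) with hUdef
  set Vmat : Matrix (Fin p) (Fin p) ℂ := Matrix.of (fun i a => V₀ i (τ a)) with hVdef
  set Dmat : Matrix (Fin m) (Fin p) ℂ := Matrix.of (fun i a =>
    if (i : ℕ) = (a : ℕ) then ((Real.sqrt (ν a) : ℝ) : ℂ) else 0) with hDdef
  have hUU : Umat ᴴ * Umat = 1 := by
    ext a c
    rw [Matrix.mul_apply, Matrix.one_apply]
    simp only [hUdef, Matrix.conjTranspose_apply, Matrix.of_apply]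
    have hbo := (orthonormal_iff_ite.mp b.orthonormal) a c
    rw [PiLp.inner_apply] at hbo
    simp only [RCLike.inner_apply] at hbo
    rw [← hbo]; exact Finset.sum_congr rfl fun x _ => mul_comm _ _
  have hUU' : Umat * Umat ᴴ = 1 := mul_eq_one_comm.mp hUU
  have hVV : Vmat ᴴ * Vmat = 1 := by
    ext a c
    have h : (V₀ᴴ * V₀) (τ a) (τ c) = (1 : Matrix (Fin p) (Fin p) ℂ) (τ a) (τ c) := by
      rw [hV₀unit]
    rw [Matrix.mul_apply, Matrix.one_apply] at h
    simp_rw [Matrix.conjTranspose_apply] at h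
    rw [Matrix.mul_apply, Matrix.one_apply]
    simp only [hVdef, Matrix.conjTranspose_apply, Matrix.of_apply]
    rw [h]
    simp [Equiv.apply_eq_iff_eq]
  have hVV' : Vmat * Vmat ᴴ = 1 := mul_eq_one_comm.mp hVV
  have hMV : M * Vmat = Umat * Dmat := by
    ext i a
    have hL : (M * Vmat) i a = W i (τ a) := by
      rw [hWdef, Matrix.mul_apply, Matrix.mul_apply]
      simp [hVdef]
    rw [hL, Matrix.mul_apply]
    by_cases hνa : ν a = 0
    · rw [hWzero (τ a) hνa i]
      symm
      apply Finset.sum_eq_zero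
      intro i' _
      simp only [hUdef, hDdef, Matrix.of_apply, hνa, Real.sqrt_zero]
      split <;> simp
    · have har : (a : ℕ) < r := hB a hνa
      have ham : (a : ℕ) < m := lt_of_lt_of_le har hrm
      have hsa : Real.sqrt (ν a) ≠ 0 :=
        Real.sqrt_ne_zero'.mpr (lt_of_le_of_ne (hν a) (Ne.symm hνa))
      rw [Finset.sum_eq_single (⟨(a : ℕ), ham⟩ : Fin m)]
      · simp only [hUdef, hDdef, Matrix.of_apply, if_pos rfl]
        have hbv : b (⟨(a : ℕ), ham⟩ : Fin m) = v (⟨(a : ℕ), ham⟩ : Fin m) :=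
          hb _ (by simpa using har)
        rw [hbv, hvdef]
        simp only
        rw [dif_pos (show ((⟨(a : ℕ), ham⟩ : Fin m) : ℕ) < r from har)]
        have hfix : (⟨((⟨(a : ℕ), ham⟩ : Fin m) : ℕ), lt_of_lt_of_le har hrp⟩ : Fin p) = a :=
          Fin.ext rfl
        rw [hfix, hudef]
        simp only [PiLp.smul_apply, smul_eq_mul, hwcoldef]
        have hμν : μ (τ a) = ν a := rfl
        rw [hμν]
        field_simp
        rw [if_pos trivial, mul_div_assoc, div_self (Complex.ofReal_ne_zero.mpr hsa), mul_one]
      · intro i' _ hi'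
        simp only [hUdef, hDdef, Matrix.of_apply]
        rw [if_neg (fun h => hi' (Fin.ext h)), mul_zero]
      · intro h
        exact absurd (Finset.mem_univ _) h
  refine ⟨Umat, Vmat, Dmat, hUU', hUU, hVV', hVV, ?_, ?_, ?_⟩
  · intro i j hij
    simp only [hDdef, Matrix.of_apply]
    rw [if_neg hij]
  · intro i j
    simp only [hDdef, Matrix.of_apply]
    split
    · simp [Real.sqrt_nonneg]
    · simp
  · calc M = M * (Vmat * Vmat ᴴ) := by rw [hVV', Matrix.mul_one]
      _ = (M * Vmat) * Vmat ᴴ := (Matrix.mul_assoc M Vmat (Vmat ᴴ)).symm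
      _ = Umat * Dmat * Vmat ᴴ := by rw [hMV]

end TSVDAux

/-- t-SVD: every third-order tensor `X` admits a decomposition
`X = U ∗ S ∗ Vᴴ` with `U`, `V` orthogonal tensors and `S` f-diagonal whose Fourier-domain
frontal slices have nonnegative real diagonal entries. -/
theorem tsvd_exists {n1 n2 n3 : ℕ} [NeZero n3] (X : Tensor n1 n2 n3) :
    ∃ (U : Tensor n1 n1 n3) (S : Tensor n1 n2 n3) (V : Tensor n2 n2 n3),
      TOrthogonal U ∧ TOrthogonal V ∧ FDiagonal S ∧
      (∀ (i : Fin n1) (j : Fin n2) (k : ZMod n3), (i : ℕ) = (j : ℕ) →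
        0 ≤ (mdft S i j k).re ∧ (mdft S i j k).im = 0) ∧
      X = tProd (tProd U S) (tconj V) := by
  classical
  have hsvd := fun k : ZMod n3 => TSVDAux.svd_exists (fslice (mdft X) k)
  choose Uf Vf Df hU1 hU2 hV1 hV2 hdiag hpos hfac using hsvd
  set U : Tensor n1 n1 n3 := TSVDAux.imdft (fun i j k => Uf k i j) with hUdef
  set S : Tensor n1 n2 n3 := TSVDAux.imdft (fun i j k => Df k i j) with hSdef
  set V : Tensor n2 n2 n3 := TSVDAux.imdft (fun i j k => Vf k i j) with hVdef
  have hmU : ∀ i j k, mdft U i j k = Uf k i j := by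
    intro i j k; rw [hUdef, TSVDAux.mdft_imdft]
  have hmS : ∀ i j k, mdft S i j k = Df k i j := by
    intro i j k; rw [hSdef, TSVDAux.mdft_imdft]
  have hmV : ∀ i j k, mdft V i j k = Vf k i j := by
    intro i j k; rw [hVdef, TSVDAux.mdft_imdft]
  refine ⟨U, S, V, ⟨?_, ?_⟩, ⟨?_, ?_⟩, ?_, ?_, ?_⟩
  · -- U * Uᴴ = I
    apply TSVDAux.mdft_inj
    funext i j k
    rw [TSVDAux.mdft_tProd, TSVDAux.mdft_tId]
    simp_rw [TSVDAux.mdft_tconj, hmU]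
    have h : (Uf k * (Uf k)ᴴ) i j = (1 : Matrix (Fin n1) (Fin n1) ℂ) i j := by rw [hU1 k]
    rw [Matrix.mul_apply, Matrix.one_apply] at h
    simp_rw [Matrix.conjTranspose_apply] at h
    exact h
  · -- Uᴴ * U = I
    apply TSVDAux.mdft_inj
    funext i j k
    rw [TSVDAux.mdft_tProd, TSVDAux.mdft_tId]
    simp_rw [TSVDAux.mdft_tconj, hmU]
    have h : ((Uf k)ᴴ * Uf k) i j = (1 : Matrix (Fin n1) (Fin n1) ℂ) i j := by rw [hU2 k]
    rw [Matrix.mul_apply, Matrix.one_apply] at h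
    simp_rw [Matrix.conjTranspose_apply] at h
    exact h
  · -- V * Vᴴ = I
    apply TSVDAux.mdft_inj
    funext i j k
    rw [TSVDAux.mdft_tProd, TSVDAux.mdft_tId]
    simp_rw [TSVDAux.mdft_tconj, hmV]
    have h : (Vf k * (Vf k)ᴴ) i j = (1 : Matrix (Fin n2) (Fin n2) ℂ) i j := by rw [hV1 k]
    rw [Matrix.mul_apply, Matrix.one_apply] at h
    simp_rw [Matrix.conjTranspose_apply] at h
    exact h
  · -- Vᴴ * V = I
    apply TSVDAux.mdft_inj
    funext i j k
    rw [TSVDAux.mdft_tProd, TSVDAux.mdft_tId]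
    simp_rw [TSVDAux.mdft_tconj, hmV]
    have h : ((Vf k)ᴴ * Vf k) i j = (1 : Matrix (Fin n2) (Fin n2) ℂ) i j := by rw [hV2 k]
    rw [Matrix.mul_apply, Matrix.one_apply] at h
    simp_rw [Matrix.conjTranspose_apply] at h
    exact h
  · -- FDiagonal S
    intro i j k hij
    have h0 : (fun k' : ZMod n3 => Df k' i j) = fun _ => (0 : ℂ) :=
      funext fun k' => hdiag k' i j hij
    show TSVDAux.idft (fun k' => Df k' i j) k = 0
    rw [h0]
    exact TSVDAux.idft_zero_fun k
  · -- nonneg real Fourier-domain diagonal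
    intro i j k _
    rw [hmS]
    exact hpos k i j
  · -- factorization
    apply TSVDAux.mdft_inj
    funext i j k
    rw [TSVDAux.mdft_tProd]
    simp_rw [TSVDAux.mdft_tProd, TSVDAux.mdft_tconj, hmU, hmS, hmV]
    have h : fslice (mdft X) k i j = (Uf k * Df k * (Vf k)ᴴ) i j := by rw [hfac k]
    rw [Matrix.mul_apply] at h
    simp_rw [Matrix.mul_apply, Matrix.conjTranspose_apply] at h
    exact h

end
end

section
/- Multiplication by an orthogonal tensor preserves the Frobenius norm: if Q ∈ ℂ^{n1×n1×n3} is orthogonal, then for every n1 × n2 × n3 tensor X, ‖Q ∗ X‖_F = ‖X‖_F. -/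
open Matrix
open scoped BigOperators ComplexConjugate

noncomputable section

lemma orth_sum {n1 n3 : ℕ} [NeZero n3] (Q : Tensor n1 n1 n3)
    (hQ : tProd (tconj Q) Q = tId n1 n3) (k k' : Fin n1) (u : ZMod n3) :
    ∑ i : Fin n1, ∑ s : ZMod n3, conj (Q i k' s) * Q i k (u + s)
      = if u = 0 ∧ k' = k then 1 else 0 := by
  have h := congrFun (congrFun (congrFun hQ k') k) u
  simp only [tProd, cconv, tconj, tId, Finset.sum_apply] at h
  rw [← h]
  refine Finset.sum_congr rfl fun i _ => ?_
  refine Fintype.sum_equiv (Equiv.neg (ZMod n3)) _ _ fun s => ?_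
  simp [sub_neg_eq_add]
lemma mul_conj_sum {n1 n3 : ℕ} [NeZero n3] (f g : Fin n1 → ZMod n3 → ℂ) :
    (∑ k : Fin n1, ∑ s : ZMod n3, f k s) * conj (∑ k' : Fin n1, ∑ s' : ZMod n3, g k' s')
      = ∑ k : Fin n1, ∑ k' : Fin n1, ∑ s : ZMod n3, ∑ s' : ZMod n3, f k s * conj (g k' s') := by
  rw [map_sum, Finset.sum_mul_sum]
  refine Finset.sum_congr rfl fun k _ => Finset.sum_congr rfl fun k' _ => ?_
  rw [map_sum, Finset.sum_mul_sum]

lemma key {n1 n2 n3 : ℕ} [NeZero n3] (Q : Tensor n1 n1 n3)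
    (hQ : tProd (tconj Q) Q = tId n1 n3) (X : Tensor n1 n2 n3) (j : Fin n2) :
    ∑ i : Fin n1, ∑ t : ZMod n3, tProd Q X i j t * conj (tProd Q X i j t)
      = ∑ k : Fin n1, ∑ t : ZMod n3, X k j t * conj (X k j t) := by
  have expand : ∀ (i : Fin n1) (t : ZMod n3), tProd Q X i j t
      = ∑ k : Fin n1, ∑ s : ZMod n3, Q i k s * X k j (t - s) := by
    intro i t; simp [tProd, cconv, Finset.sum_apply]
  calc ∑ i : Fin n1, ∑ t : ZMod n3, tProd Q X i j t * conj (tProd Q X i j t)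
      = ∑ x : Fin n1 × ZMod n3 × Fin n1 × Fin n1 × ZMod n3 × ZMod n3,
          (Q x.1 x.2.2.1 x.2.2.2.2.1 * X x.2.2.1 j (x.2.1 - x.2.2.2.2.1)) *
          conj (Q x.1 x.2.2.2.1 x.2.2.2.2.2 * X x.2.2.2.1 j (x.2.1 - x.2.2.2.2.2)) := by
        simp only [Fintype.sum_prod_type]
        refine Finset.sum_congr rfl fun i _ => Finset.sum_congr rfl fun t _ => ?_
        rw [expand i t, mul_conj_sum]
    _ = ∑ y : Fin n1 × Fin n1 × ZMod n3 × ZMod n3 × Fin n1 × ZMod n3,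
          (conj (Q y.2.2.2.2.1 y.2.1 y.2.2.2.2.2) * Q y.2.2.2.2.1 y.1 (y.2.2.1 + y.2.2.2.2.2)) *
          (X y.1 j (y.2.2.2.1 - y.2.2.1) * conj (X y.2.1 j y.2.2.2.1)) := by
        refine (Fintype.sum_equiv ⟨fun y => (y.2.2.2.2.1, y.2.2.2.1 + y.2.2.2.2.2, y.1, y.2.1,
            y.2.2.1 + y.2.2.2.2.2, y.2.2.2.2.2),
          fun x => (x.2.2.1, x.2.2.2.1, x.2.2.2.2.1 - x.2.2.2.2.2, x.2.1 - x.2.2.2.2.2,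
            x.1, x.2.2.2.2.2), ?_, ?_⟩ _ _ ?_).symm
        · rintro ⟨k, k', u, t', i, s'⟩
          simp [add_sub_cancel_right]
        · rintro ⟨i, t, k, k', s, s'⟩
          simp [sub_add_cancel]
        · rintro ⟨k, k', u, t', i, s'⟩
          simp only [Equiv.coe_fn_mk, add_sub_add_right_eq_sub, add_sub_cancel_right, _root_.map_mul]
          ring
    _ = ∑ k : Fin n1, ∑ k' : Fin n1, ∑ u : ZMod n3,
          (if u = 0 ∧ k' = k then (1:ℂ) else 0) *
          ∑ t' : ZMod n3, X k j (t' - u) * conj (X k' j t') := by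
        simp only [Fintype.sum_prod_type]
        refine Finset.sum_congr rfl fun k _ => Finset.sum_congr rfl fun k' _ =>
          Finset.sum_congr rfl fun u _ => ?_
        rw [Finset.sum_comm]
        rw [← orth_sum Q hQ k k' u, Finset.sum_mul]
        refine Finset.sum_congr rfl fun i _ => ?_
        rw [Finset.sum_comm, Finset.sum_mul]
        refine Finset.sum_congr rfl fun s' _ => ?_
        rw [Finset.mul_sum]
    _ = ∑ k : Fin n1, ∑ t : ZMod n3, X k j t * conj (X k j t) := by
        refine Finset.sum_congr rfl fun k _ => ?_
        simp [ite_and, ite_mul, Finset.sum_ite_eq, Finset.sum_ite_eq', sub_zero]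

/-- multiplication by an orthogonal tensor preserves the Frobenius norm. -/
theorem frob_tProd_orthogonal {n1 n2 n3 : ℕ} [NeZero n3]
    (Q : Tensor n1 n1 n3) (hQ : TOrthogonal Q) (X : Tensor n1 n2 n3) :
    frob (tProd Q X) = frob X := by
  have habs : ∀ j : Fin n2, (∑ i : Fin n1, ∑ t : ZMod n3, ‖tProd Q X i j t‖ ^ 2)
      = ∑ k : Fin n1, ∑ t : ZMod n3, ‖X k j t‖ ^ 2 := by
    intro j
    have h := congrArg Complex.re (key Q hQ.2 X j)
    simpa [Complex.mul_conj, Complex.normSq_eq_norm_sq, Complex.re_sum, ← Complex.ofReal_pow, Complex.ofReal_re] using h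
  simp only [frob]
  congr 1
  calc ∑ i : Fin n1, ∑ j : Fin n2, ∑ t : ZMod n3, ‖tProd Q X i j t‖ ^ 2
      = ∑ j : Fin n2, ∑ i : Fin n1, ∑ t : ZMod n3, ‖tProd Q X i j t‖ ^ 2 :=
        Finset.sum_comm
    _ = ∑ j : Fin n2, ∑ k : Fin n1, ∑ t : ZMod n3, ‖X k j t‖ ^ 2 :=
        Finset.sum_congr rfl fun j _ => habs j
    _ = ∑ k : Fin n1, ∑ j : Fin n2, ∑ t : ZMod n3, ‖X k j t‖ ^ 2 :=
        Finset.sum_comm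

end
end

section
/- (Matrix singular value thresholding) Let A ∈ ℂ^{m×n} have singular value decomposition A = U Σ V^H with singular values σ_1, …, σ_r, and let τ > 0. Then the matrix Y* = U D V^H, where D is the diagonal matrix with entries D_ii = max(σ_i − τ, 0), is a global minimizer of the function Y ↦ ‖Y‖_* + (1/(2τ))·‖Y − A‖_F² over ℂ^{m×n}. -/
open Matrix
open scoped BigOperators ComplexConjugate

noncomputable section

/-! ### Auxiliary lemmas for the SVT theorem -/

open scoped ComplexOrder MatrixOrder in
noncomputable def Matrix.PosSemidef.sqrt {n : Type*} [Fintype n] [DecidableEq n] {A : Matrix n n ℂ}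
    (hA : A.PosSemidef) : Matrix n n ℂ :=
  (hA.1.eigenvectorUnitary : Matrix n n ℂ) *
    diagonal (fun i => ((Real.sqrt (hA.1.eigenvalues i) : ℝ) : ℂ)) *
    star (hA.1.eigenvectorUnitary : Matrix n n ℂ)
open scoped ComplexOrder MatrixOrder in
lemma Matrix.PosSemidef.sqrt_eq_cfc {n : Type*} [Fintype n] [DecidableEq n] {A : Matrix n n ℂ}
    (hA : A.PosSemidef) : hA.sqrt = CFC.sqrt A := by
  rw [CFC.sqrt_eq_cfc, cfc_nnreal_eq_real _ A hA.nonneg, hA.1.cfc_eq, IsHermitian.cfc,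
    Matrix.PosSemidef.sqrt, Unitary.conjStarAlgAut_apply]
  congr 3
  ext i
  simp [Real.coe_sqrt, hA.eigenvalues_nonneg i]
open scoped ComplexOrder MatrixOrder in
lemma Matrix.PosSemidef.posSemidef_sqrt {n : Type*} [Fintype n] [DecidableEq n] {A : Matrix n n ℂ}
    (hA : A.PosSemidef) : hA.sqrt.PosSemidef := by
  rw [hA.sqrt_eq_cfc, ← nonneg_iff_posSemidef]
  exact CFC.sqrt_nonneg A
open scoped ComplexOrder MatrixOrder in
lemma Matrix.PosSemidef.sqrt_mul_self {n : Type*} [Fintype n] [DecidableEq n] {A : Matrix n n ℂ}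
    (hA : A.PosSemidef) : hA.sqrt * hA.sqrt = A := by
  rw [hA.sqrt_eq_cfc]
  exact CFC.sqrt_mul_sqrt_self A hA.nonneg
open scoped ComplexOrder MatrixOrder in
lemma Matrix.PosSemidef.eq_sqrt_of_sq_eq {n : Type*} [Fintype n] [DecidableEq n] {A : Matrix n n ℂ}
    (hA : A.PosSemidef) {B : Matrix n n ℂ} (hB : B.PosSemidef) (hsq : A ^ 2 = B) :
    A = hB.sqrt := by
  rw [hB.sqrt_eq_cfc]
  exact (CFC.sqrt_unique (by rw [← sq]; exact hsq) hA.nonneg).symm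

open scoped ComplexOrder in
lemma aux_zero_le_real {x : ℝ} (h : 0 ≤ x) : (0 : ℂ) ≤ (x : ℂ) := Complex.zero_le_real.mpr h

lemma sum_abs_sq_eq_re_trace {m n : ℕ} (M : Matrix (Fin m) (Fin n) ℂ) :
    ∑ i : Fin m, ∑ j : Fin n, ‖M i j‖ ^ 2 = (Matrix.trace (Mᴴ * M)).re := by
  rw [Matrix.trace, Complex.re_sum, Finset.sum_comm]
  refine Finset.sum_congr rfl fun j _ => ?_
  rw [Matrix.diag_apply, Matrix.mul_apply, Complex.re_sum]
  refine Finset.sum_congr rfl fun i _ => ?_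
  simp [Matrix.conjTranspose_apply, ← Complex.normSq_eq_conj_mul_self, Complex.sq_norm]

lemma sum_abs_sq_unitary {m n : ℕ} (M : Matrix (Fin m) (Fin n) ℂ)
    (U : Matrix (Fin m) (Fin m) ℂ) (V : Matrix (Fin n) (Fin n) ℂ)
    (hU : U ∈ Matrix.unitaryGroup (Fin m) ℂ) (hV : V ∈ Matrix.unitaryGroup (Fin n) ℂ) :
    ∑ i : Fin m, ∑ j : Fin n, ‖(U * M * Vᴴ) i j‖ ^ 2
      = ∑ i : Fin m, ∑ j : Fin n, ‖M i j‖ ^ 2 := by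
  rw [sum_abs_sq_eq_re_trace, sum_abs_sq_eq_re_trace]
  have hUs : Uᴴ * U = 1 := (Matrix.mem_unitaryGroup_iff'.mp hU)
  have hVs : Vᴴ * V = 1 := (Matrix.mem_unitaryGroup_iff'.mp hV)
  have : (U * M * Vᴴ)ᴴ * (U * M * Vᴴ) = V * (Mᴴ * M) * Vᴴ := by
    simp only [Matrix.conjTranspose_mul, Matrix.conjTranspose_conjTranspose]
    calc V * (Mᴴ * Uᴴ) * (U * M * Vᴴ) = V * (Mᴴ * ((Uᴴ * U) * M)) * Vᴴ := by
          simp only [Matrix.mul_assoc]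
      _ = V * (Mᴴ * M) * Vᴴ := by rw [hUs, Matrix.one_mul]
  rw [this, Matrix.trace_mul_cycle, ← Matrix.mul_assoc, hVs, Matrix.one_mul]

open scoped ComplexOrder in
lemma nuclearNorm_eq_re_trace_sqrt {m n : ℕ} (M : Matrix (Fin m) (Fin n) ℂ) :
    nuclearNorm M = (Matrix.trace ((Matrix.posSemidef_conjTranspose_mul_self M).sqrt)).re := by
  rw [Matrix.PosSemidef.sqrt, Matrix.trace_mul_cycle]
  have h1 : (star ((Matrix.posSemidef_conjTranspose_mul_self M).1.eigenvectorUnitary :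
      Matrix (Fin n) (Fin n) ℂ)) * ((Matrix.posSemidef_conjTranspose_mul_self M).1.eigenvectorUnitary :
      Matrix (Fin n) (Fin n) ℂ) = 1 := Unitary.coe_star_mul_self _
  rw [h1, Matrix.one_mul, Matrix.trace_diagonal, nuclearNorm, Complex.re_sum]
  rfl

lemma conj_key {m n : ℕ} (M : Matrix (Fin m) (Fin n) ℂ)
    (U : Matrix (Fin m) (Fin m) ℂ) (V : Matrix (Fin n) (Fin n) ℂ)
    (hU : U ∈ Matrix.unitaryGroup (Fin m) ℂ) :
    (U * M * Vᴴ)ᴴ * (U * M * Vᴴ) = V * (Mᴴ * M) * Vᴴ := by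
  have hUs : Uᴴ * U = 1 := Matrix.mem_unitaryGroup_iff'.mp hU
  simp only [Matrix.conjTranspose_mul, Matrix.conjTranspose_conjTranspose]
  calc V * (Mᴴ * Uᴴ) * (U * M * Vᴴ) = V * (Mᴴ * ((Uᴴ * U) * M)) * Vᴴ := by
        simp only [Matrix.mul_assoc]
    _ = V * (Mᴴ * M) * Vᴴ := by rw [hUs, Matrix.one_mul]

open scoped ComplexOrder in
lemma nuclearNorm_unitary {m n : ℕ} (M : Matrix (Fin m) (Fin n) ℂ)
    (U : Matrix (Fin m) (Fin m) ℂ) (V : Matrix (Fin n) (Fin n) ℂ)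
    (hU : U ∈ Matrix.unitaryGroup (Fin m) ℂ) (hV : V ∈ Matrix.unitaryGroup (Fin n) ℂ) :
    nuclearNorm (U * M * Vᴴ) = nuclearNorm M := by
  have hVs : Vᴴ * V = 1 := Matrix.mem_unitaryGroup_iff'.mp hV
  have hP := Matrix.posSemidef_conjTranspose_mul_self M
  set S := hP.sqrt with hSdef
  have hS : Matrix.PosSemidef (V * S * Vᴴ) := hP.posSemidef_sqrt.mul_mul_conjTranspose_same V
  have hsq : (V * S * Vᴴ) ^ 2 = (U * M * Vᴴ)ᴴ * (U * M * Vᴴ) := by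
    rw [conj_key M U V hU, pow_two]
    calc V * S * Vᴴ * (V * S * Vᴴ) = V * (S * ((Vᴴ * V) * S)) * Vᴴ := by
          simp only [Matrix.mul_assoc]
      _ = V * (Mᴴ * M) * Vᴴ := by rw [hVs, Matrix.one_mul, hSdef, hP.sqrt_mul_self]
  have heq : V * S * Vᴴ = (Matrix.posSemidef_conjTranspose_mul_self (U * M * Vᴴ)).sqrt :=
    hS.eq_sqrt_of_sq_eq _ hsq
  rw [nuclearNorm_eq_re_trace_sqrt, nuclearNorm_eq_re_trace_sqrt, ← heq,
    Matrix.trace_mul_cycle, hVs, Matrix.one_mul]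

open scoped ComplexOrder in
lemma nuclearNorm_of_sq_diag {m n : ℕ} (M : Matrix (Fin m) (Fin n) ℂ) (d : Fin n → ℝ)
    (hd : ∀ j, 0 ≤ d j) (h : Mᴴ * M = Matrix.diagonal (fun j => ((d j : ℂ)) ^ 2)) :
    nuclearNorm M = ∑ j, d j := by
  have hdiagPSD : Matrix.PosSemidef (Matrix.diagonal fun j => (d j : ℂ)) :=
    Matrix.posSemidef_diagonal_iff.mpr fun j => aux_zero_le_real (hd j)
  have hsq : (Matrix.diagonal fun j => (d j : ℂ)) ^ 2 = Mᴴ * M := by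
    rw [h, pow_two, Matrix.diagonal_mul_diagonal]
    simp [pow_two]
  have heq := hdiagPSD.eq_sqrt_of_sq_eq (Matrix.posSemidef_conjTranspose_mul_self M) hsq
  rw [nuclearNorm_eq_re_trace_sqrt, ← heq, Matrix.trace_diagonal, Complex.re_sum]
  simp

lemma diagType_conjTranspose_mul_self {m n : ℕ} (M : Matrix (Fin m) (Fin n) ℂ) (d : Fin n → ℝ)
    (hM : ∀ i j, M i j = if (i : ℕ) = (j : ℕ) then ((if h : (j : ℕ) < m then d j else 0 : ℝ) : ℂ) else 0) :
    Mᴴ * M = Matrix.diagonal (fun (j : Fin n) => ((if h : (j : ℕ) < m then d j else 0 : ℝ) : ℂ) ^ 2) := by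
  ext j k
  simp only [Matrix.mul_apply, Matrix.conjTranspose_apply, Matrix.diagonal_apply]
  by_cases hjk : j = k
  · subst hjk
    by_cases hjm : (j : ℕ) < m
    · rw [Finset.sum_eq_single ⟨(j : ℕ), hjm⟩]
      · simp [hM, hjm, pow_two, ← Complex.ofReal_mul, Complex.conj_ofReal]
      · intro i _ hi
        rw [hM]
        have : (i : ℕ) ≠ (j : ℕ) := fun hc => hi (Fin.ext hc)
        simp [this]
      · simp
    · rw [Finset.sum_eq_zero, if_pos rfl]
      · simp [hjm]
      · intro i _
        rw [hM]
        by_cases hij : (i : ℕ) = (j : ℕ)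
        · exfalso; exact hjm (hij ▸ i.isLt)
        · simp [hij]
  · rw [if_neg hjk, Finset.sum_eq_zero]
    intro i _
    rw [hM i k, hM i j]
    by_cases hik : (i : ℕ) = (k : ℕ)
    · have : (i : ℕ) ≠ (j : ℕ) := fun hc => hjk (Fin.ext (hik ▸ hc).symm)
      simp [this]
    · simp [hik]

lemma abs_star_dot_le {k : ℕ} (u v : Fin k → ℂ) :
    ‖dotProduct (star u) v‖
      ≤ Real.sqrt (∑ i, ‖u i‖ ^ 2) * Real.sqrt (∑ i, ‖v i‖ ^ 2) := by
  have h := norm_inner_le_norm (𝕜 := ℂ) (WithLp.toLp 2 u) (WithLp.toLp 2 v)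
  rw [EuclideanSpace.inner_toLp_toLp, dotProduct_comm] at h
  simpa [EuclideanSpace.norm_eq] using h

lemma sum_dite_swap {m n : ℕ} (f : Fin n → ℝ) :
    (∑ i : Fin m, if h : (i : ℕ) < n then f ⟨(i : ℕ), h⟩ else 0)
      = ∑ a : Fin n, if (a : ℕ) < m then f a else 0 := by
  set g : ℕ → ℝ := fun k => if h : k < n then f ⟨k, h⟩ else 0 with hg
  have h1 : (∑ i : Fin m, if h : (i : ℕ) < n then f ⟨(i : ℕ), h⟩ else 0)
      = ∑ k ∈ Finset.range m, g k := by
    rw [Finset.sum_range fun k => g k]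
  have h2 : (∑ a : Fin n, if (a : ℕ) < m then f a else 0)
      = ∑ k ∈ Finset.range n, (if k < m then g k else 0) := by
    rw [Finset.sum_range]
    refine Finset.sum_congr rfl fun a _ => ?_
    by_cases ham : (a : ℕ) < m <;> simp [ham, hg, a.isLt]
  rw [h1, h2]
  have h3 : ∑ k ∈ Finset.range m, g k = ∑ k ∈ Finset.range (min m n), g k := by
    refine (Finset.sum_subset (Finset.range_subset_range.mpr (min_le_left m n)) ?_).symm
    intro k hk hk2
    have hkm := Finset.mem_range.mp hk
    have hkn : ¬ k < n := fun hc => hk2 (Finset.mem_range.mpr (lt_min hkm hc))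
    simp [hg, hkn]
  have h4 : (∑ k ∈ Finset.range n, if k < m then g k else 0)
      = ∑ k ∈ Finset.range (min m n), if k < m then g k else 0 := by
    refine (Finset.sum_subset (Finset.range_subset_range.mpr (min_le_right m n)) ?_).symm
    intro k hk hk2
    have hkn := Finset.mem_range.mp hk
    have hkm : ¬ k < m := fun hc => hk2 (Finset.mem_range.mpr (lt_min hc hkn))
    simp [hkm]
  rw [h3, h4]
  refine Finset.sum_congr rfl fun k hk => ?_
  have := Finset.mem_range.mp hk
  rw [if_pos (lt_of_lt_of_le this (min_le_left m n))]

lemma sum_abs_sq_eq_re_dot {k : ℕ} (v : Fin k → ℂ) :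
    ∑ i, ‖v i‖ ^ 2 = (dotProduct (star v) v).re := by
  rw [dotProduct, Complex.re_sum]
  refine Finset.sum_congr rfl fun i _ => ?_
  simp [← Complex.normSq_eq_conj_mul_self, Complex.sq_norm]


lemma sum_diag_abs_le_nuclearNorm {m n : ℕ} (Z : Matrix (Fin m) (Fin n) ℂ) :
    (∑ j : Fin n, if h : (j : ℕ) < m then ‖Z ⟨(j : ℕ), h⟩ j‖ else 0)
      ≤ nuclearNorm Z := by
  classical
  set hH := Matrix.isHermitian_conjTranspose_mul_self Z with hHdef
  set μ : Fin n → ℝ := hH.eigenvalues with hμ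
  have hμ0 : ∀ j, 0 ≤ μ j := fun j => Matrix.eigenvalues_conjTranspose_mul_self_nonneg Z j
  set w : Fin n → (Fin n → ℂ) := fun j => (hH.eigenvectorBasis j).ofLp with hw
  set W : Matrix (Fin n) (Fin n) ℂ := (hH.eigenvectorUnitary : Matrix (Fin n) (Fin n) ℂ) with hWdef
  have hWapp : ∀ a j, W a j = w j a := fun a j => Matrix.IsHermitian.eigenvectorUnitary_apply hH a j
  -- the normalizations
  have hwnorm : ∀ j, dotProduct (star (w j)) (w j) = 1 := by
    intro j
    have h1 : dotProduct (star (w j)) (w j) = inner (𝕜 := ℂ) (hH.eigenvectorBasis j) (hH.eigenvectorBasis j) := by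
      rw [EuclideanSpace.inner_eq_star_dotProduct, dotProduct_comm]
    rw [h1, inner_self_eq_norm_sq_to_K, hH.eigenvectorBasis.orthonormal.1 j]
    norm_num
  -- phases
  set c : Fin n → ℂ := fun a => if h : (a : ℕ) < m then
      (if Z ⟨(a : ℕ), h⟩ a = 0 then 1 else (starRingEnd ℂ) (Z ⟨(a : ℕ), h⟩ a) / ‖Z ⟨(a : ℕ), h⟩ a‖) else 0 with hc
  have hc1 : ∀ a, ‖c a‖ ≤ 1 := by
    intro a
    rw [hc]
    by_cases h : (a : ℕ) < m
    · simp only [h, dif_pos]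
      by_cases hz : Z ⟨(a : ℕ), h⟩ a = 0
      · simp [hz]
      · rw [if_neg hz, norm_div, Complex.norm_conj, Complex.norm_real,
          Real.norm_of_nonneg (norm_nonneg _), div_self (norm_ne_zero_iff.mpr hz)]
    · simp [h]
  have hcz : ∀ (a : Fin n) (h : (a : ℕ) < m),
      c a * Z ⟨(a : ℕ), h⟩ a = (‖Z ⟨(a : ℕ), h⟩ a‖ : ℂ) := by
    intro a h
    rw [hc]
    simp only [h, dif_pos]
    by_cases hz : Z ⟨(a : ℕ), h⟩ a = 0
    · simp [hz]
    · rw [if_neg hz, div_mul_eq_mul_div, mul_comm, Complex.mul_conj, Complex.normSq_eq_norm_sq]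
      push_cast
      rw [pow_two, mul_div_assoc, div_self (Complex.ofReal_ne_zero.mpr (norm_ne_zero_iff.mpr hz)),
        mul_one]
  set E : Matrix (Fin n) (Fin m) ℂ := Matrix.of (fun a i => if (a : ℕ) = (i : ℕ) then c a else 0) with hE
  -- trace identity
  have htr : Matrix.trace (E * Z)
      = ((∑ j : Fin n, if h : (j : ℕ) < m then ‖Z ⟨(j : ℕ), h⟩ j‖ else 0 : ℝ) : ℂ) := by
    rw [Matrix.trace]
    push_cast
    refine Finset.sum_congr rfl fun a _ => ?_
    rw [Matrix.diag_apply, Matrix.mul_apply]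
    by_cases h : (a : ℕ) < m
    · rw [dif_pos h, Finset.sum_eq_single (⟨(a : ℕ), h⟩ : Fin m)]
      · simp only [hE, Matrix.of_apply]
        rw [if_true]
        exact hcz a h
      · intro i _ hi
        have : (a : ℕ) ≠ (i : ℕ) := fun hcst => hi (Fin.ext hcst.symm)
        simp [hE, this]
      · simp
    · rw [dif_neg h, Complex.ofReal_zero]
      refine Finset.sum_eq_zero fun i _ => ?_
      have : (a : ℕ) ≠ (i : ℕ) := fun hcst => h (hcst ▸ i.isLt)
      simp [hE, this]
  -- cyclic trace
  have hWW : W * Wᴴ = 1 := by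
    have h0 := Matrix.mem_unitaryGroup_iff.mp hH.eigenvectorUnitary.2
    simpa [Matrix.star_eq_conjTranspose] using h0
  have hcyc : Matrix.trace (Wᴴ * (E * Z) * W) = Matrix.trace (E * Z) := by
    rw [Matrix.trace_mul_cycle, hWW, Matrix.one_mul]
  -- key bound per j
  have key : ∀ j, ‖(Wᴴ * (E * Z) * W) j j‖ ≤ Real.sqrt (μ j) := by
    intro j
    have hdiag : (Wᴴ * (E * Z) * W) j j
        = dotProduct (star (w j)) ((E * Z) *ᵥ (w j)) := by
      simp only [Matrix.mul_apply, Matrix.mulVec, dotProduct,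
        Matrix.conjTranspose_apply, Pi.star_apply, hWapp, Finset.sum_mul, Finset.mul_sum]
      rw [Finset.sum_comm]
      exact Finset.sum_congr rfl fun b _ => Finset.sum_congr rfl fun a _ =>
        Finset.sum_congr rfl fun x _ => by ring
    have hsplit : (E * Z) *ᵥ (w j) = E *ᵥ (Z *ᵥ (w j)) := (Matrix.mulVec_mulVec _ _ _).symm
    have hmove : dotProduct (star (w j)) (E *ᵥ (Z *ᵥ w j))
        = dotProduct (star (Eᴴ *ᵥ (w j))) (Z *ᵥ w j) := by
      rw [Matrix.dotProduct_mulVec, Matrix.star_mulVec, Matrix.conjTranspose_conjTranspose]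
    have hZw : ∑ i, ‖(Z *ᵥ w j) i‖ ^ 2 = μ j := by
      rw [sum_abs_sq_eq_re_dot]
      have e1 : dotProduct (star (Z *ᵥ w j)) (Z *ᵥ w j) = ((μ j : ℝ) : ℂ) := by
        rw [Matrix.star_mulVec, ← Matrix.dotProduct_mulVec, Matrix.mulVec_mulVec]
        have e2 : (Zᴴ * Z) *ᵥ (w j) = (μ j) • (w j) := hH.mulVec_eigenvectorBasis j
        rw [e2, dotProduct_smul, hwnorm j]
        simp
      rw [e1, Complex.ofReal_re]
    have hEw : ∑ i, ‖(Eᴴ *ᵥ (w j)) i‖ ^ 2 ≤ 1 := by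
      have hent : ∀ i : Fin m, (Eᴴ *ᵥ (w j)) i
          = if h : (i : ℕ) < n then star (c ⟨(i : ℕ), h⟩) * w j ⟨(i : ℕ), h⟩ else 0 := by
        intro i
        rw [Matrix.mulVec, dotProduct]
        by_cases h : (i : ℕ) < n
        · rw [dif_pos h, Finset.sum_eq_single (⟨(i : ℕ), h⟩ : Fin n)]
          · simp [hE, Matrix.conjTranspose_apply]
          · intro b _ hb
            have hbi : (b : ℕ) ≠ (i : ℕ) := fun hcst => hb (Fin.ext hcst)
            simp [hE, Matrix.conjTranspose_apply, hbi]
          · simp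
        · rw [dif_neg h]
          refine Finset.sum_eq_zero fun b _ => ?_
          have hbi : (b : ℕ) ≠ (i : ℕ) := fun hcst => h (hcst ▸ b.isLt)
          simp [hE, Matrix.conjTranspose_apply, hbi]
      calc ∑ i, ‖(Eᴴ *ᵥ (w j)) i‖ ^ 2
          = ∑ i : Fin m, (if h : (i : ℕ) < n
              then ‖star (c ⟨(i : ℕ), h⟩) * w j ⟨(i : ℕ), h⟩‖ ^ 2 else 0) := by
            refine Finset.sum_congr rfl fun i _ => ?_
            rw [hent i]
            by_cases h : (i : ℕ) < n <;> simp [h]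
        _ = ∑ a : Fin n, (if (a : ℕ) < m then ‖star (c a) * w j a‖ ^ 2 else 0) :=
            sum_dite_swap (fun a => ‖star (c a) * w j a‖ ^ 2)
        _ ≤ ∑ a : Fin n, ‖w j a‖ ^ 2 := by
            refine Finset.sum_le_sum fun a _ => ?_
            by_cases h : (a : ℕ) < m
            · rw [if_pos h, norm_mul]
              have h2 : ‖star (c a)‖ ≤ 1 := by simpa using hc1 a
              rw [mul_pow]
              exact mul_le_of_le_one_left (sq_nonneg _)
                (pow_le_one₀ (norm_nonneg _) h2)
            · rw [if_neg h]; positivity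
        _ = 1 := by rw [sum_abs_sq_eq_re_dot, hwnorm j]; simp
    have b1 : Real.sqrt (∑ i, ‖(Eᴴ *ᵥ (w j)) i‖ ^ 2) ≤ 1 := by
      have hb := Real.sqrt_le_sqrt hEw
      simpa using hb
    rw [hdiag, hsplit, hmove]
    refine le_trans (abs_star_dot_le _ _) ?_
    rw [hZw]
    exact mul_le_of_le_one_left (Real.sqrt_nonneg _) b1
  -- assembly
  have final : (∑ j : Fin n, if h : (j : ℕ) < m then ‖Z ⟨(j : ℕ), h⟩ j‖ else 0)
      = (Matrix.trace (E * Z)).re := by rw [htr, Complex.ofReal_re]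
  rw [final, ← hcyc, Matrix.trace, Complex.re_sum]
  simp only [Matrix.diag_apply]
  calc ∑ j, ((Wᴴ * (E * Z) * W) j j).re
      ≤ ∑ j, ‖(Wᴴ * (E * Z) * W) j j‖ :=
        Finset.sum_le_sum fun j _ => Complex.re_le_norm _
    _ ≤ ∑ j, Real.sqrt (μ j) := Finset.sum_le_sum fun j _ => key j
    _ = nuclearNorm Z := rfl


lemma scalar_svt {σ τ : ℝ} (hσ : 0 ≤ σ) (hτ : 0 < τ) (z : ℂ) :
    max (σ - τ) 0 + 1 / (2 * τ) * (σ - max (σ - τ) 0) ^ 2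
      ≤ ‖z‖ + 1 / (2 * τ) * ‖z - (σ : ℂ)‖ ^ 2 := by
  set t := ‖z‖ with ht
  have ht0 : 0 ≤ t := norm_nonneg z
  have habs : |t - σ| ≤ ‖z - (σ : ℂ)‖ := by
    have h1 := abs_norm_sub_norm_le z (σ : ℂ)
    rwa [Complex.norm_real, Real.norm_of_nonneg hσ] at h1
  have hsq : (t - σ) ^ 2 ≤ ‖z - (σ : ℂ)‖ ^ 2 := by
    have h2 := pow_le_pow_left₀ (abs_nonneg (t - σ)) habs 2
    rwa [sq_abs] at h2
  have main : max (σ - τ) 0 + 1 / (2 * τ) * (σ - max (σ - τ) 0) ^ 2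
      ≤ t + 1 / (2 * τ) * (t - σ) ^ 2 := by
    have hrw : ∀ u v : ℝ, u + 1 / (2 * τ) * v = (u * (2 * τ) + v) / (2 * τ) := by
      intro u v; field_simp
    rw [hrw, hrw, div_le_div_iff_of_pos_right (by linarith)]
    rcases le_or_gt σ τ with hcase | hcase
    · rw [max_eq_right (by linarith)]
      nlinarith [mul_nonneg ht0 (by linarith : (0:ℝ) ≤ 2 * τ - 2 * σ), mul_nonneg ht0 ht0]
    · rw [max_eq_left (by linarith)]
      nlinarith [sq_nonneg (t - (σ - τ))]
  refine le_trans main ?_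
  have : 0 < 1 / (2 * τ) := by positivity
  nlinarith

lemma frobM_sq {m n : ℕ} (M : Matrix (Fin m) (Fin n) ℂ) :
    frobM M ^ 2 = ∑ i : Fin m, ∑ j : Fin n, ‖M i j‖ ^ 2 :=
  Real.sq_sqrt (by positivity)

lemma diag_sum_le_total {m n : ℕ} (M : Matrix (Fin m) (Fin n) ℂ) :
    (∑ j : Fin n, if h : (j : ℕ) < m then ‖M ⟨(j : ℕ), h⟩ j‖ ^ 2 else 0)
      ≤ ∑ i : Fin m, ∑ j : Fin n, ‖M i j‖ ^ 2 := by
  rw [Finset.sum_comm]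
  refine Finset.sum_le_sum fun j _ => ?_
  by_cases h : (j : ℕ) < m
  · rw [dif_pos h]
    exact Finset.single_le_sum (f := fun i : Fin m => ‖M i j‖ ^ 2)
      (fun i _ => by positivity) (Finset.mem_univ (⟨(j : ℕ), h⟩ : Fin m))
  · rw [dif_neg h]
    positivity

lemma sum_sq_diagType {m n : ℕ} (M : Matrix (Fin m) (Fin n) ℂ) (g : Fin n → ℝ)
    (hM : ∀ i j, M i j = if (i : ℕ) = (j : ℕ) then (g j : ℂ) else 0) :
    ∑ i : Fin m, ∑ j : Fin n, ‖M i j‖ ^ 2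
      = ∑ j : Fin n, if (j : ℕ) < m then g j ^ 2 else 0 := by
  rw [Finset.sum_comm]
  refine Finset.sum_congr rfl fun j _ => ?_
  by_cases h : (j : ℕ) < m
  · rw [if_pos h, Finset.sum_eq_single (⟨(j : ℕ), h⟩ : Fin m)]
    · rw [hM]
      simp [Complex.sq_norm, Complex.normSq_ofReal, pow_two]
    · intro i _ hi
      rw [hM]
      have : (i : ℕ) ≠ (j : ℕ) := fun hc => hi (Fin.ext hc)
      simp [this]
    · simp
  · rw [if_neg h]
    refine Finset.sum_eq_zero fun i _ => ?_
    rw [hM]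
    have : (i : ℕ) ≠ (j : ℕ) := fun hc => h (hc ▸ i.isLt)
    simp [this]


/-- matrix singular value thresholding: if `A = U Σ Vᴴ` is an SVD of `A`
with nonincreasing nonnegative singular values `σ`, and `τ > 0`, then `Y* = U D Vᴴ`, where
`D` has diagonal entries `max (σ i - τ) 0`, globally minimizes
`Y ↦ ‖Y‖_* + (1/(2τ))·‖Y − A‖_F²`. -/
theorem svt_minimizer {m n : ℕ} (A : Matrix (Fin m) (Fin n) ℂ)
    (U : Matrix (Fin m) (Fin m) ℂ) (V : Matrix (Fin n) (Fin n) ℂ)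
    (hU : U ∈ Matrix.unitaryGroup (Fin m) ℂ) (hV : V ∈ Matrix.unitaryGroup (Fin n) ℂ)
    (σ : ℕ → ℝ) (hσ : ∀ i, 0 ≤ σ i) (hσmono : ∀ i j, i ≤ j → σ j ≤ σ i)
    (Sg : Matrix (Fin m) (Fin n) ℂ)
    (hSg : ∀ i j, Sg i j = if (i : ℕ) = (j : ℕ) then ((σ (i : ℕ) : ℝ) : ℂ) else 0)
    (hA : A = U * Sg * Vᴴ)
    (τ : ℝ) (hτ : 0 < τ)
    (D : Matrix (Fin m) (Fin n) ℂ)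
    (hD : ∀ i j, D i j = if (i : ℕ) = (j : ℕ) then ((max (σ (i : ℕ) - τ) 0 : ℝ) : ℂ) else 0) :
    ∀ Y : Matrix (Fin m) (Fin n) ℂ,
      nuclearNorm (U * D * Vᴴ) + 1 / (2 * τ) * frobM (U * D * Vᴴ - A) ^ 2
        ≤ nuclearNorm Y + 1 / (2 * τ) * frobM (Y - A) ^ 2 := by
  intro Y
  have hτ2 : (0:ℝ) < 1 / (2 * τ) := by positivity
  have hUU : U * Uᴴ = 1 := by
    have h0 := Matrix.mem_unitaryGroup_iff.mp hU
    simpa [Matrix.star_eq_conjTranspose] using h0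
  have hVV : V * Vᴴ = 1 := by
    have h0 := Matrix.mem_unitaryGroup_iff.mp hV
    simpa [Matrix.star_eq_conjTranspose] using h0
  set Z : Matrix (Fin m) (Fin n) ℂ := Uᴴ * Y * V with hZ
  have hY : U * Z * Vᴴ = Y := by
    rw [hZ]
    simp only [← Matrix.mul_assoc]
    rw [hUU, Matrix.one_mul, Matrix.mul_assoc, hVV, Matrix.mul_one]
  have hDform : ∀ i j, D i j = if (i : ℕ) = (j : ℕ)
      then ((if h : (j : ℕ) < m then max (σ (j : ℕ) - τ) 0 else 0 : ℝ) : ℂ) else 0 := by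
    intro i j
    rw [hD]
    by_cases hij : (i : ℕ) = (j : ℕ)
    · have hjm : (j : ℕ) < m := hij ▸ i.isLt
      simp [hij, hjm]
    · simp [hij]
  have hDD := diagType_conjTranspose_mul_self D (fun j => max (σ (j : ℕ) - τ) 0) hDform
  have A1 : nuclearNorm (U * D * Vᴴ) = ∑ j : Fin n,
      (if h : (j : ℕ) < m then max (σ (j : ℕ) - τ) 0 else 0) := by
    rw [nuclearNorm_unitary D U V hU hV]
    exact nuclearNorm_of_sq_diag D _
      (fun j => by by_cases h : (j : ℕ) < m <;> simp [h, le_max_right]) hDD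
  have A2 : frobM (U * D * Vᴴ - A) ^ 2 = ∑ j : Fin n,
      (if (j : ℕ) < m then (max (σ (j : ℕ) - τ) 0 - σ (j : ℕ)) ^ 2 else 0) := by
    have hX : U * D * Vᴴ - A = U * (D - Sg) * Vᴴ := by
      rw [hA, Matrix.mul_sub, Matrix.sub_mul]
    rw [hX, frobM_sq, sum_abs_sq_unitary _ U V hU hV,
      sum_sq_diagType _ (fun j => max (σ (j : ℕ) - τ) 0 - σ (j : ℕ))]
    intro i j
    rw [Matrix.sub_apply, hD, hSg]
    by_cases hij : (i : ℕ) = (j : ℕ) <;> simp [hij, Complex.ofReal_sub]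
  have B1 : (∑ j : Fin n, if h : (j : ℕ) < m then ‖Z ⟨(j : ℕ), h⟩ j‖ else 0)
      ≤ nuclearNorm Y := by
    rw [← hY, nuclearNorm_unitary Z U V hU hV]
    exact sum_diag_abs_le_nuclearNorm Z
  have B2 : (∑ j : Fin n, if h : (j : ℕ) < m
        then ‖Z ⟨(j : ℕ), h⟩ j - ((σ (j : ℕ) : ℝ) : ℂ)‖ ^ 2 else 0)
      ≤ frobM (Y - A) ^ 2 := by
    have hXA : Y - A = U * (Z - Sg) * Vᴴ := by
      rw [hA, ← hY, Matrix.mul_sub, Matrix.sub_mul]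
    rw [hXA, frobM_sq, sum_abs_sq_unitary _ U V hU hV]
    refine le_trans (le_of_eq ?_) (diag_sum_le_total (Z - Sg))
    refine Finset.sum_congr rfl fun j _ => ?_
    by_cases h : (j : ℕ) < m
    · rw [dif_pos h, dif_pos h, Matrix.sub_apply, hSg]
      simp
    · rw [dif_neg h, dif_neg h]
  have C : ∀ j : Fin n,
      (if h : (j : ℕ) < m then max (σ (j : ℕ) - τ) 0 else 0)
        + 1 / (2 * τ) * (if (j : ℕ) < m then (max (σ (j : ℕ) - τ) 0 - σ (j : ℕ)) ^ 2 else 0)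
      ≤ (if h : (j : ℕ) < m then ‖Z ⟨(j : ℕ), h⟩ j‖ else 0)
        + 1 / (2 * τ) * (if h : (j : ℕ) < m
            then ‖Z ⟨(j : ℕ), h⟩ j - ((σ (j : ℕ) : ℝ) : ℂ)‖ ^ 2 else 0) := by
    intro j
    by_cases h : (j : ℕ) < m
    · rw [dif_pos h, if_pos h, dif_pos h, dif_pos h]
      have hsq : (max (σ (j : ℕ) - τ) 0 - σ (j : ℕ)) ^ 2
          = (σ (j : ℕ) - max (σ (j : ℕ) - τ) 0) ^ 2 := by ring
      rw [hsq]
      exact scalar_svt (hσ (j : ℕ)) hτ (Z ⟨(j : ℕ), h⟩ j)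
    · simp [h]
  calc nuclearNorm (U * D * Vᴴ) + 1 / (2 * τ) * frobM (U * D * Vᴴ - A) ^ 2
      = ∑ j : Fin n, ((if h : (j : ℕ) < m then max (σ (j : ℕ) - τ) 0 else 0)
          + 1 / (2 * τ) * (if (j : ℕ) < m
              then (max (σ (j : ℕ) - τ) 0 - σ (j : ℕ)) ^ 2 else 0)) := by
        rw [A1, A2, Finset.sum_add_distrib, Finset.mul_sum]
    _ ≤ ∑ j : Fin n, ((if h : (j : ℕ) < m then ‖Z ⟨(j : ℕ), h⟩ j‖ else 0)
          + 1 / (2 * τ) * (if h : (j : ℕ) < m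
              then ‖Z ⟨(j : ℕ), h⟩ j - ((σ (j : ℕ) : ℝ) : ℂ)‖ ^ 2 else 0)) :=
        Finset.sum_le_sum fun j _ => C j
    _ = (∑ j : Fin n, if h : (j : ℕ) < m then ‖Z ⟨(j : ℕ), h⟩ j‖ else 0)
          + 1 / (2 * τ) * (∑ j : Fin n, if h : (j : ℕ) < m
              then ‖Z ⟨(j : ℕ), h⟩ j - ((σ (j : ℕ) : ℝ) : ℂ)‖ ^ 2 else 0) := by
        rw [Finset.sum_add_distrib, Finset.mul_sum]
    _ ≤ nuclearNorm Y + 1 / (2 * τ) * frobM (Y - A) ^ 2 :=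
        add_le_add B1 (mul_le_mul_of_nonneg_left B2 (le_of_lt hτ2))


end
end

section
/- (Correctness of Algorithm 1) Let X be an n1 × n2 × n3 complex tensor. For each k, let X̄^(k) = U_k Σ_k V_k^H be a singular value decomposition of the k-th Fourier-domain frontal slice of X. Define tensors U, S, V by taking the inverse mode-3 DFT of the tensors whose k-th frontal slices are U_k, Σ_k, V_k respectively. Then X = U ∗ S ∗ V^H, U and V are orthogonal tensors, and S is f-diagonal. -/
open Matrix
open scoped BigOperators ComplexConjugate

noncomputable section

/-- Inverse unnormalized DFT: `idft x t = (1/n) ∑ k, x k * exp(2πi/n) ^ (k*t)`. -/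
def idft {n : ℕ} [NeZero n] (x : ZMod n → ℂ) : ZMod n → ℂ :=
  fun t => (n : ℂ)⁻¹ *
    ∑ k : ZMod n, x k * Complex.exp (2 * Real.pi * Complex.I / n) ^ (k * t).val

/-- Inverse mode-3 DFT of a family of frontal slices: the tensor whose mode-3 tubes are
the inverse DFTs of the tubes of the stacked slices. -/
def stackIdft {a b n3 : ℕ} [NeZero n3] (Ms : ZMod n3 → Matrix (Fin a) (Fin b) ℂ) :
    Tensor a b n3 :=
  fun i j => idft fun k => Ms k i j

namespace TsvdAux

def ω (n : ℕ) : ℂ := Complex.exp (-(2 * Real.pi * Complex.I) / n)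

variable {n : ℕ} [NeZero n]

lemma ω_pow_n : ω n ^ n = 1 := by
  have hn : (n:ℂ) ≠ 0 := Nat.cast_ne_zero.2 (NeZero.ne n)
  rw [ω, ← Complex.exp_nat_mul]
  have : (n:ℂ) * (-(2 * Real.pi * Complex.I) / n) = -(2 * Real.pi * Complex.I) := by
    field_simp
  rw [this, Complex.exp_neg, Complex.exp_two_pi_mul_I, inv_one]

def e (n : ℕ) [NeZero n] (a : ZMod n) : ℂ := ω n ^ a.val

lemma ω_pow_mod (j : ℕ) : ω n ^ j = ω n ^ (j % n) := by
  conv_lhs => rw [← Nat.div_add_mod j n]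
  rw [pow_add, pow_mul, ω_pow_n, one_pow, one_mul]

lemma e_add (a b : ZMod n) : e n (a + b) = e n a * e n b := by
  rw [e, e, e, ZMod.val_add, ← ω_pow_mod, pow_add]

lemma e_zero : e n (0 : ZMod n) = 1 := by simp [e]

lemma e_neg (a : ZMod n) : e n (-a) = (e n a)⁻¹ := by
  have h : e n (-a) * e n a = 1 := by rw [← e_add, neg_add_cancel, e_zero]
  exact eq_inv_of_mul_eq_one_left h

lemma e_pow_n (a : ZMod n) : e n a ^ n = 1 := by
  rw [e, ← pow_mul, mul_comm, pow_mul, ω_pow_n, one_pow]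

lemma e_ne_one {a : ZMod n} (ha : a ≠ 0) : e n a ≠ 1 := by
  have hprim : IsPrimitiveRoot (Complex.exp (2 * Real.pi * Complex.I / n)) n :=
    Complex.isPrimitiveRoot_exp n (NeZero.ne n)
  have hω : IsPrimitiveRoot (ω n) n := by
    have : ω n = (Complex.exp (2 * Real.pi * Complex.I / n))⁻¹ := by
      rw [ω, ← Complex.exp_neg, neg_div]
    rw [this]
    exact hprim.inv
  exact hω.pow_ne_one_of_pos_of_lt (ZMod.val_pos.2 ha).ne' (ZMod.val_lt a)

lemma e_mul (a b : ZMod n) : e n (a * b) = e n a ^ b.val := by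
  have hb : ((b.val : ZMod n)) = b := by simp [ZMod.natCast_val, ZMod.cast_id]
  conv_lhs => rw [← hb]
  induction b.val with
  | zero => simp [e_zero]
  | succ m ih =>
      push_cast
      rw [mul_add, mul_one, e_add, pow_succ]
      push_cast at ih
      rw [ih]

lemma sum_e (a : ZMod n) : ∑ t : ZMod n, e n (a * t) = if a = 0 then (n : ℂ) else 0 := by
  split_ifs with h
  · subst h
    simp [e_zero, Finset.card_univ]
  · have key : ∑ t : ZMod n, e n (a * t) = ∑ j ∈ Finset.range n, e n a ^ j := by
      rw [Finset.sum_bij' (fun (t : ZMod n) _ => t.val) (fun j _ => (j : ZMod n))]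
      · intro t _; exact Finset.mem_range.2 (ZMod.val_lt t)
      · intro j _; exact Finset.mem_univ _
      · intro t _; simp [ZMod.natCast_val, ZMod.cast_id]
      · intro j hj; exact ZMod.val_cast_of_lt (Finset.mem_range.1 hj)
      · intro t _; rw [e_mul]
    rw [key, geom_sum_eq (e_ne_one h), e_pow_n, sub_self, zero_div]

lemma conj_ω : (starRingEnd ℂ) (ω n) = (ω n)⁻¹ := by
  rw [ω, ← Complex.exp_conj, ← Complex.exp_neg]
  congr 1
  simp [map_div₀, map_ofNat]
  ring

lemma conj_e (a : ZMod n) : (starRingEnd ℂ) (e n a) = e n (-a) := by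
  rw [e, map_pow, conj_ω, inv_pow, ← e, e_neg]

lemma dft_eq (x : ZMod n → ℂ) (k : ZMod n) : dft x k = ∑ t : ZMod n, x t * e n (k * t) := rfl

lemma idft_eq (x : ZMod n → ℂ) (t : ZMod n) :
    idft x t = (n : ℂ)⁻¹ * ∑ k : ZMod n, x k * e n (-(k * t)) := by
  have hexp : Complex.exp (2 * Real.pi * Complex.I / n) = (ω n)⁻¹ := by
    rw [ω, neg_div, ← Complex.exp_neg, neg_neg]
  unfold idft
  congr 1
  refine Finset.sum_congr rfl fun k _ => ?_
  rw [hexp, inv_pow, ← e, ← e_neg]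

lemma idft_dft (x : ZMod n → ℂ) : idft (dft x) = x := by
  have hn : (n : ℂ) ≠ 0 := Nat.cast_ne_zero.2 (NeZero.ne n)
  funext t
  rw [idft_eq]
  have key : ∀ s k : ZMod n, x s * e n (k * s) * e n (-(k * t)) = x s * e n ((s - t) * k) := by
    intro s k
    rw [mul_assoc, ← e_add]
    congr 2
    ring
  simp only [dft_eq, Finset.sum_mul, key]
  rw [Finset.sum_comm]
  simp only [← Finset.mul_sum, sum_e, sub_eq_zero]
  simp only [mul_ite, mul_zero, Finset.sum_ite_eq', Finset.mem_univ, if_true]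
  field_simp

lemma dft_idft (x : ZMod n → ℂ) : dft (idft x) = x := by
  have hn : (n : ℂ) ≠ 0 := Nat.cast_ne_zero.2 (NeZero.ne n)
  funext k
  have key : ∀ t : ZMod n, idft x t * e n (k * t)
      = (n : ℂ)⁻¹ * ∑ m : ZMod n, x m * e n ((k - m) * t) := by
    intro t
    rw [idft_eq, mul_assoc]
    congr 1
    rw [Finset.sum_mul]
    refine Finset.sum_congr rfl fun m _ => ?_
    rw [mul_assoc, ← e_add]
    congr 2
    ring
  rw [dft_eq]
  simp only [key]
  rw [← Finset.mul_sum, Finset.sum_comm]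
  simp only [← Finset.mul_sum, sum_e, sub_eq_zero]
  simp only [mul_ite, mul_zero, Finset.sum_ite_eq, Finset.mem_univ, if_true]
  field_simp

lemma dft_cconv (a b : ZMod n → ℂ) (k : ZMod n) :
    dft (cconv a b) k = dft a k * dft b k := by
  simp only [dft_eq, cconv, Finset.sum_mul]
  rw [Finset.sum_comm]
  refine Finset.sum_congr rfl fun s _ => ?_
  rw [Finset.mul_sum]
  refine Fintype.sum_equiv (Equiv.subRight s) _ _ fun u => ?_
  simp only [Equiv.subRight_apply]
  rw [show k * u = k * s + k * (u - s) by ring, e_add]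
  ring

lemma dft_conj_flip (x : ZMod n → ℂ) (k : ZMod n) :
    dft (fun t => (starRingEnd ℂ) (x (-t))) k = (starRingEnd ℂ) (dft x k) := by
  rw [dft_eq, dft_eq, map_sum]
  refine Fintype.sum_equiv (Equiv.neg (ZMod n)) _ _ fun s => ?_
  simp only [Equiv.neg_apply, neg_neg, _root_.map_mul, conj_e]
  congr 2
  ring

lemma dft_fin_sum {m : ℕ} (g : Fin m → ZMod n → ℂ) (k : ZMod n) :
    dft (∑ l : Fin m, g l) k = ∑ l : Fin m, dft (g l) k := by
  simp only [dft_eq, Finset.sum_apply, Finset.sum_mul]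
  exact Finset.sum_comm


section TensorLemmas

lemma mdft_stackIdft {a b : ℕ} (Ms : ZMod n → Matrix (Fin a) (Fin b) ℂ)
    (i : Fin a) (j : Fin b) (k : ZMod n) :
    mdft (stackIdft Ms) i j k = Ms k i j :=
  congrFun (dft_idft (fun k => Ms k i j)) k

lemma tensor_ext {n1 n2 : ℕ} {A B : Tensor n1 n2 n}
    (h : ∀ i j k, mdft A i j k = mdft B i j k) : A = B := by
  funext i j
  have hd : dft (A i j) = dft (B i j) := funext fun k => h i j k
  calc A i j = idft (dft (A i j)) := (idft_dft _).symm
    _ = idft (dft (B i j)) := by rw [hd]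
    _ = B i j := idft_dft _

lemma mdft_tProd {n1 n2 n4 : ℕ} (A : Tensor n1 n2 n) (B : Tensor n2 n4 n)
    (i : Fin n1) (j : Fin n4) (k : ZMod n) :
    mdft (tProd A B) i j k = ∑ l : Fin n2, mdft A i l k * mdft B l j k := by
  show dft (∑ l : Fin n2, cconv (A i l) (B l j)) k = _
  rw [dft_fin_sum]
  exact Finset.sum_congr rfl fun l _ => dft_cconv _ _ _

lemma mdft_tconj {n1 n2 : ℕ} (A : Tensor n1 n2 n) (i : Fin n2) (j : Fin n1) (k : ZMod n) :
    mdft (tconj A) i j k = (starRingEnd ℂ) (mdft A j i k) :=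
  dft_conj_flip _ _

lemma mdft_tId {m : ℕ} (i j : Fin m) (k : ZMod n) :
    mdft (tId m n) i j k = if i = j then 1 else 0 := by
  show dft (fun t => if t = 0 ∧ i = j then 1 else 0) k = _
  rw [dft_eq]
  by_cases h : i = j
  · simp only [h, and_true, ite_mul, one_mul, zero_mul, if_true]
    rw [Finset.sum_ite_eq' Finset.univ (0 : ZMod n) (fun t => e n (k * t))]
    simp [e_zero]
  · simp [h]

end TensorLemmas

end TsvdAux

/-- correctness of the t-SVD algorithm: if `X̄⁽ᵏ⁾ = U_k Σ_k V_kᴴ` is an SVD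
of each Fourier-domain frontal slice of `X`, and `U, S, V` are obtained by inverse mode-3
DFT of the stacked factors, then `X = U ∗ S ∗ Vᴴ`, `U` and `V` are orthogonal tensors,
and `S` is f-diagonal. -/
theorem tsvd_algorithm_correct {n1 n2 n3 : ℕ} [NeZero n3] (X : Tensor n1 n2 n3)
    (Uk : ZMod n3 → Matrix (Fin n1) (Fin n1) ℂ)
    (Sk : ZMod n3 → Matrix (Fin n1) (Fin n2) ℂ)
    (Vk : ZMod n3 → Matrix (Fin n2) (Fin n2) ℂ)
    (hUk : ∀ k, Uk k ∈ Matrix.unitaryGroup (Fin n1) ℂ)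
    (hVk : ∀ k, Vk k ∈ Matrix.unitaryGroup (Fin n2) ℂ)
    (hSkdiag : ∀ (k : ZMod n3) (i : Fin n1) (j : Fin n2), (i : ℕ) ≠ (j : ℕ) → Sk k i j = 0)
    (hSknn : ∀ (k : ZMod n3) (i : Fin n1) (j : Fin n2),
      0 ≤ (Sk k i j).re ∧ (Sk k i j).im = 0)
    (hX : ∀ k, fslice (mdft X) k = Uk k * Sk k * (Vk k)ᴴ) :
    X = tProd (tProd (stackIdft Uk) (stackIdft Sk)) (tconj (stackIdft Vk)) ∧
    TOrthogonal (stackIdft Uk) ∧ TOrthogonal (stackIdft Vk) ∧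
    FDiagonal (stackIdft Sk) := by
  refine ⟨TsvdAux.tensor_ext fun i j k => ?_,
    ⟨TsvdAux.tensor_ext fun i j k => ?_, TsvdAux.tensor_ext fun i j k => ?_⟩,
    ⟨TsvdAux.tensor_ext fun i j k => ?_, TsvdAux.tensor_ext fun i j k => ?_⟩,
    fun i j k hij => ?_⟩
  · -- X = U * S * Vᴴ
    have hx : fslice (mdft X) k i j = (Uk k * Sk k * (Vk k)ᴴ) i j :=
      congrFun (congrFun (congrArg (fun M => (M : Matrix _ _ ℂ)) (hX k)) i) j
    simp only [Matrix.mul_apply, Matrix.conjTranspose_apply, Finset.sum_mul] at hx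
    simp only [TsvdAux.mdft_tProd, TsvdAux.mdft_tconj, TsvdAux.mdft_stackIdft,
      Finset.sum_mul]
    exact hx
  · -- U * Uᴴ = I
    have h1 : Uk k * (Uk k)ᴴ = 1 := by
      have := (Matrix.mem_unitaryGroup_iff).1 (hUk k)
      rwa [Matrix.star_eq_conjTranspose] at this
    have hx := congrFun (congrFun h1 i) j
    simp only [Matrix.mul_apply, Matrix.conjTranspose_apply, Matrix.one_apply] at hx
    simp only [TsvdAux.mdft_tProd, TsvdAux.mdft_tconj, TsvdAux.mdft_stackIdft,
      TsvdAux.mdft_tId]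
    exact hx
  · -- Uᴴ * U = I
    have h1 : (Uk k)ᴴ * Uk k = 1 := by
      have := (Matrix.mem_unitaryGroup_iff').1 (hUk k)
      rwa [Matrix.star_eq_conjTranspose] at this
    have hx := congrFun (congrFun h1 i) j
    simp only [Matrix.mul_apply, Matrix.conjTranspose_apply, Matrix.one_apply] at hx
    simp only [TsvdAux.mdft_tProd, TsvdAux.mdft_tconj, TsvdAux.mdft_stackIdft,
      TsvdAux.mdft_tId]
    exact hx
  · -- V * Vᴴ = I
    have h1 : Vk k * (Vk k)ᴴ = 1 := by
      have := (Matrix.mem_unitaryGroup_iff).1 (hVk k)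
      rwa [Matrix.star_eq_conjTranspose] at this
    have hx := congrFun (congrFun h1 i) j
    simp only [Matrix.mul_apply, Matrix.conjTranspose_apply, Matrix.one_apply] at hx
    simp only [TsvdAux.mdft_tProd, TsvdAux.mdft_tconj, TsvdAux.mdft_stackIdft,
      TsvdAux.mdft_tId]
    exact hx
  · -- Vᴴ * V = I
    have h1 : (Vk k)ᴴ * Vk k = 1 := by
      have := (Matrix.mem_unitaryGroup_iff').1 (hVk k)
      rwa [Matrix.star_eq_conjTranspose] at this
    have hx := congrFun (congrFun h1 i) j
    simp only [Matrix.mul_apply, Matrix.conjTranspose_apply, Matrix.one_apply] at hx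
    simp only [TsvdAux.mdft_tProd, TsvdAux.mdft_tconj, TsvdAux.mdft_stackIdft,
      TsvdAux.mdft_tId]
    exact hx
  · -- f-diagonal
    show stackIdft Sk i j k = 0
    simp [stackIdft, idft, hSkdiag _ i j hij]

end
end
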